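/- arXiv:2403.19134 — 3 statements merged into one kernel-verified Lean document; each statement's English description precedes it below -/
import Mathlib

section
/- (Comparison principle, two free boundaries.) Let T > 0, let J₁ satisfy (J), d₁, μ > 0, let m be bounded and continuous on [0,T]×ℝ and set F(t,x,s) := s(m(t,x) − s). Let ḡ, h̄, g̲, h̲ ∈ C¹([0,T]) with g̲ < h̲, ḡ < h̄, ḡ′ ≤ 0 ≤ h̄′ and g̲′ ≤ 0 ≤ h̲′. Let ū, u̲ : [0,T]×ℝ → ℝ be nonnegative, bounded and continuous, differentiable in t for x in the respective moving regions. Suppose: (i) ū_t(t,x) ≥ d₁∫_{ḡ(t)}^{h̄(t)} J₁(x−y)ū(t,y)dy − d₁ū(t,x) + F(t,x,ū(t,x)) for t ∈ (0,T], ḡ(t) < x < h̄(t); ū(t,x) ≥ 0 for x ∉ (ḡ(t),h̄(t)); h̄′(t) ≥ μ∫_{ḡ(t)}^{h̄(t)}∫_{h̄(t)}^{∞} J₁(x−y)ū(t,x)dy dx and ḡ′(t) ≤ −μ∫_{ḡ(t)}^{h̄(t)}∫_{−∞}^{ḡ(t)} J₁(x−y)ū(t,x)dy dx for t ∈ (0,T];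 (ii) u̲ satisfies the same relations with all inequality signs reversed (in particular u̲(t,x) = 0 for x ∉ (g̲(t),h̲(t))); (iii) [g̲(0),h̲(0)] ⊆ [ḡ(0),h̄(0)] and ū(0,x) ≥ u̲(0,x) for x ∈ [g̲(0),h̲(0)]. Then [g̲(t),h̲(t)] ⊆ [ḡ(t),h̄(t)] for all t ∈ [0,T], and u̲(t,x) ≤ ū(t,x) for all t ∈ [0,T] and x ∈ [g̲(t),h̲(t)]. -/
open MeasureTheory Filter Topology

/-- Assumption (J) on a kernel function. -/
def IsKernel (J : ℝ → ℝ) : Prop :=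
  Continuous J ∧ (∃ C, ∀ x, J x ≤ C) ∧ (∀ x, J (-x) = J x) ∧
    (∀ x, 0 ≤ J x) ∧ 0 < J 0 ∧ (∫ x, J x) = 1

/-- Positive-part fundamental-theorem-of-calculus style auxiliary lemma. -/
lemma pp_aux {f U : ℝ → ℝ} {a b : ℝ} (hab : a ≤ b)
    (hf : ContinuousOn f (Set.Icc a b))
    (hUc : ContinuousOn U (Set.Icc a b))
    (hU0 : ∀ s ∈ Set.Icc a b, 0 ≤ U s)
    (hD : ∀ s ∈ Set.Ioo a b, 0 < f s → ∃ D, HasDerivAt f D s ∧ D ≤ U s) :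
    ∃ c ∈ Set.Icc a b, (∀ s ∈ Set.Ioo c b, 0 < f s) ∧
      f b ≤ max (f a) 0 + ∫ s in c..b, U s := by
  have hUI : IntegrableOn U (Set.Icc a b) := hUc.integrableOn_Icc
  have key : ∀ c, a ≤ c → c ≤ b → (∀ s ∈ Set.Ioo c b, 0 < f s) →
      f b ≤ f c + ∫ s in c..b, U s := by
    intro c hac hcb hpos
    rcases eq_or_lt_of_le hcb with rfl | hlt
    · simp
    set g : ℝ → ℝ := fun s => f s - ∫ r in c..s, U r with hg
    have hUIc : IntegrableOn U (Set.uIcc c b) := by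
      rw [Set.uIcc_of_le hcb]
      exact hUI.mono_set (Set.Icc_subset_Icc hac le_rfl)
    have hgc : ContinuousOn g (Set.Icc c b) := by
      apply ContinuousOn.sub (hf.mono (Set.Icc_subset_Icc hac le_rfl))
      have := intervalIntegral.continuousOn_primitive_interval (a := c) (b := b) (f := U)
        (μ := volume) hUIc
      rwa [Set.uIcc_of_le hcb] at this
    have hder : ∀ s ∈ Set.Ioo c b, ∃ D, HasDerivAt g (D - U s) s ∧ D ≤ U s := by
      intro s hs
      obtain ⟨D, hDD, hDU⟩ := hD s ⟨lt_of_le_of_lt hac hs.1, hs.2⟩ (hpos s hs)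
      have hprim : HasDerivAt (fun u => ∫ r in c..u, U r) (U s) s := by
        apply intervalIntegral.integral_hasDerivAt_right
        · apply IntegrableOn.intervalIntegrable
          rw [Set.uIcc_of_le hs.1.le]
          exact hUI.mono_set (Set.Icc_subset_Icc hac hs.2.le)
        · exact ⟨Set.Icc a b, Icc_mem_nhds (lt_of_le_of_lt hac hs.1) (lt_of_lt_of_le hs.2 le_rfl),
            hUc.aestronglyMeasurable measurableSet_Icc⟩
        · exact hUc.continuousAt (Icc_mem_nhds (lt_of_le_of_lt hac hs.1) hs.2)
      exact ⟨D, hDD.sub hprim, hDU⟩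
    have hmono : AntitoneOn g (Set.Icc c b) := by
      apply antitoneOn_of_deriv_nonpos (convex_Icc c b) hgc
      · intro s hs
        rw [interior_Icc] at hs
        obtain ⟨D, hgd, _⟩ := hder s hs
        exact hgd.differentiableAt.differentiableWithinAt
      · intro s hs
        rw [interior_Icc] at hs
        obtain ⟨D, hgd, hDU⟩ := hder s hs
        rw [hgd.deriv]
        linarith
    have := hmono (Set.left_mem_Icc.2 hcb) (Set.right_mem_Icc.2 hcb) hcb
    simp only [hg, intervalIntegral.integral_same, sub_zero] at this
    linarith
  rcases le_or_gt (f b) 0 with hb0 | hb0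
  · refine ⟨b, ⟨hab, le_rfl⟩, fun s hs => absurd hs.1 (not_lt.2 hs.2.le), ?_⟩
    rw [intervalIntegral.integral_same]
    have := le_max_right (f a) 0
    linarith
  by_cases hne : (Set.Icc a b ∩ f ⁻¹' Set.Iic 0).Nonempty
  · have hZc : IsClosed (Set.Icc a b ∩ f ⁻¹' Set.Iic 0) :=
      hf.preimage_isClosed_of_isClosed isClosed_Icc isClosed_Iic
    have hbddZ : BddAbove (Set.Icc a b ∩ f ⁻¹' Set.Iic 0) :=
      BddAbove.mono Set.inter_subset_left bddAbove_Icc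
    set c := sSup (Set.Icc a b ∩ f ⁻¹' Set.Iic 0) with hc
    have hcZ : c ∈ Set.Icc a b ∩ f ⁻¹' Set.Iic 0 := hZc.csSup_mem hne hbddZ
    have hpos : ∀ s ∈ Set.Ioo c b, 0 < f s := by
      intro s hs
      by_contra h
      have hsZ : s ∈ Set.Icc a b ∩ f ⁻¹' Set.Iic 0 :=
        ⟨⟨hcZ.1.1.trans hs.1.le, hs.2.le⟩, not_lt.1 h⟩
      exact absurd (le_csSup hbddZ hsZ) (not_le.2 hs.1)
    have hfc : f c ≤ 0 := hcZ.2
    have h1 := key c hcZ.1.1 hcZ.1.2 hpos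
    have := le_max_right (f a) 0
    exact ⟨c, hcZ.1, hpos, by linarith⟩
  · have hpos : ∀ s ∈ Set.Ioo a b, 0 < f s := by
      intro s hs
      by_contra h
      exact hne ⟨s, ⟨Set.Ioo_subset_Icc_self hs, not_lt.1 h⟩⟩
    have h1 := key a le_rfl hab hpos
    have := le_max_left (f a) 0
    exact ⟨a, ⟨le_rfl, hab⟩, hpos, by linarith⟩

/-- Grönwall-type lemma in integral form. -/
lemma gronwall_aux {y : ℝ → ℝ} {K T : ℝ} (hT : 0 ≤ T) (_hK : 0 ≤ K)
    (hy : ContinuousOn y (Set.Icc 0 T))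
    (hy0 : ∀ t ∈ Set.Icc 0 T, 0 ≤ y t)
    (hineq : ∀ t ∈ Set.Icc 0 T, y t ≤ ∫ s in (0:ℝ)..t, K * y s) :
    ∀ t ∈ Set.Icc 0 T, y t = 0 := by
  have hyI : IntegrableOn y (Set.Icc 0 T) := hy.integrableOn_Icc
  set Y : ℝ → ℝ := fun t => ∫ s in (0:ℝ)..t, y s with hY
  have hYc : ContinuousOn Y (Set.Icc 0 T) := by
    have h0 : IntegrableOn y (Set.uIcc 0 T) := by rwa [Set.uIcc_of_le hT]
    have := intervalIntegral.continuousOn_primitive_interval (a := 0) (b := T) (f := y)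
      (μ := volume) h0
    rwa [Set.uIcc_of_le hT] at this
  have hYnonneg : ∀ t ∈ Set.Icc 0 T, 0 ≤ Y t := by
    intro t ht
    apply intervalIntegral.integral_nonneg ht.1
    intro s hs
    exact hy0 s ⟨hs.1, hs.2.trans ht.2⟩
  have hYK : ∀ t ∈ Set.Icc 0 T, y t ≤ K * Y t := by
    intro t ht
    have := hineq t ht
    rwa [intervalIntegral.integral_const_mul] at this
  set Z : ℝ → ℝ := fun t => Y t * Real.exp (-K * t) with hZ
  have hZd : ∀ t ∈ Set.Ioo 0 T, HasDerivAt Z ((y t - K * Y t) * Real.exp (-K * t)) t := by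
    intro t ht
    have hYd : HasDerivAt Y (y t) t := by
      apply intervalIntegral.integral_hasDerivAt_right
      · apply IntegrableOn.intervalIntegrable
        rw [Set.uIcc_of_le ht.1.le]
        exact hyI.mono_set (Set.Icc_subset_Icc le_rfl ht.2.le)
      · exact ⟨Set.Icc 0 T, Icc_mem_nhds ht.1 ht.2,
          hy.aestronglyMeasurable measurableSet_Icc⟩
      · exact hy.continuousAt (Icc_mem_nhds ht.1 ht.2)
    have hed : HasDerivAt (fun t => Real.exp (-K * t)) (-K * Real.exp (-K * t)) t := by
      have h1 : HasDerivAt (fun t : ℝ => -K * t) (-K) t := by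
        simpa using (hasDerivAt_id t).const_mul (-K)
      have h2 := (Real.hasDerivAt_exp (-K * t)).comp t h1
      have h4 : HasDerivAt (fun t : ℝ => Real.exp (-K * t)) (Real.exp (-K * t) * -K) t := h2
      convert h4 using 1
      ring
    have := hYd.mul hed
    exact this.congr_deriv (by ring)
  have hZmono : AntitoneOn Z (Set.Icc 0 T) := by
    apply antitoneOn_of_deriv_nonpos (convex_Icc 0 T)
    · exact hYc.mul ((Real.continuous_exp.comp (continuous_const.mul continuous_id)).continuousOn)
    · intro t ht
      rw [interior_Icc] at ht
      exact (hZd t ht).differentiableAt.differentiableWithinAt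
    · intro t ht
      rw [interior_Icc] at ht
      rw [(hZd t ht).deriv]
      have h1 := hYK t ⟨ht.1.le, ht.2.le⟩
      have h2 := Real.exp_pos (-K * t)
      nlinarith
  intro t ht
  have hZt : Z t ≤ Z 0 := hZmono (Set.left_mem_Icc.2 hT) ht ht.1
  have hZ0 : Z 0 = 0 := by simp [hZ, hY]
  have hexp := Real.exp_pos (-K * t)
  have hYt0 : Y t ≤ 0 := by
    by_contra h
    push_neg at h
    have : 0 < Z t := mul_pos h hexp
    linarith
  have hYt : Y t = 0 := le_antisymm hYt0 (hYnonneg t ht)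
  have h5 := hYK t ht
  rw [hYt] at h5
  have := hy0 t ht
  linarith

/-- Continuity of a dominated parametric integral. -/
lemma cont_param_integral {F : ℝ → ℝ → ℝ} {C a₀ b₀ : ℝ}
    (hmeas : ∀ s, AEStronglyMeasurable (F s) (volume : Measure ℝ))
    (hbd : ∀ s x, |F s x| ≤ Set.indicator (Set.Icc a₀ b₀) (fun _ => C) x)
    (hae : ∀ s₀ : ℝ, ∀ᵐ x : ℝ, Filter.Tendsto (fun s => F s x) (𝓝 s₀) (𝓝 (F s₀ x))) :
    Continuous fun s => ∫ x, F s x := by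
  rw [continuous_iff_continuousAt]
  intro s₀
  have hbint : Integrable (Set.indicator (Set.Icc a₀ b₀) (fun _ => C)) := by
    apply IntegrableOn.integrable_indicator _ measurableSet_Icc
    exact integrableOn_const (measure_Icc_lt_top).ne
  exact MeasureTheory.tendsto_integral_filter_of_dominated_convergence _
    (Filter.Eventually.of_forall hmeas)
    (Filter.Eventually.of_forall fun s => Filter.Eventually.of_forall fun x => by
      simpa [Real.norm_eq_abs] using hbd s x)
    hbint (hae s₀)

/-- Measurability of a parametric set integral. -/
lemma meas_param_gen {F : ℝ → ℝ → ℝ} (hF : Measurable fun p : ℝ × ℝ => F p.1 p.2)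
    {S : Set ℝ} (hS : MeasurableSet S) :
    Measurable fun x => ∫ y in S, F x y := by
  have h0 : ∀ x, (∫ y in S, F x y) = ∫ y, S.indicator (F x) y := fun x =>
    (MeasureTheory.integral_indicator hS).symm
  simp_rw [h0]
  have h1 : StronglyMeasurable (fun p : ℝ × ℝ => S.indicator (F p.1) p.2) := by
    have h2 : (fun p : ℝ × ℝ => S.indicator (F p.1) p.2)
        = (Prod.snd ⁻¹' S).indicator (fun p : ℝ × ℝ => F p.1 p.2) := by
      ext p
      by_cases h : p.2 ∈ S <;> simp [Set.indicator_apply, h]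
    rw [h2]
    exact (hF.indicator (measurable_snd hS)).stronglyMeasurable
  exact h1.integral_prod_right'.measurable

/-- Measurability of a parametric full integral. -/
lemma meas_param_full {F : ℝ → ℝ → ℝ} (hF : Measurable fun p : ℝ × ℝ => F p.1 p.2) :
    Measurable fun x => ∫ y, F x y :=
  hF.stronglyMeasurable.integral_prod_right'.measurable
set_option maxHeartbeats 2000000 in
/-- Lemma 5.1 (i): comparison principle with two free boundaries.
An upper solution `(ū, ḡ, h̄)` and a lower solution `(u̲, g̲, h̲)` of the one-species
free boundary problem with reaction `F(t,x,s) = s(m(t,x) - s)`, ordered at `t = 0`,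
stay ordered on `[0, T]`. Here `gb'`, `hb'`, `gl'`, `hl'` are the derivatives of the
boundary curves. -/
theorem comparison_two_free_boundaries
    (T : ℝ) (hT : 0 < T) (J₁ : ℝ → ℝ) (hJ : IsKernel J₁)
    (d₁ μ : ℝ) (hd₁ : 0 < d₁) (hμ : 0 < μ)
    (m : ℝ → ℝ → ℝ) (hm_cont : Continuous fun p : ℝ × ℝ => m p.1 p.2)
    (hm_bdd : ∃ C, ∀ t x, |m t x| ≤ C)
    (gb hb gl hl gb' hb' gl' hl' : ℝ → ℝ) (ub ul : ℝ → ℝ → ℝ)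
    -- boundary curves: C¹, ordered, monotone
    (hgbhb : ∀ t ∈ Set.Icc 0 T, gb t < hb t)
    (hglhl : ∀ t ∈ Set.Icc 0 T, gl t < hl t)
    (hgbD : ∀ t ∈ Set.Icc 0 T, HasDerivAt gb (gb' t) t)
    (hhbD : ∀ t ∈ Set.Icc 0 T, HasDerivAt hb (hb' t) t)
    (hglD : ∀ t ∈ Set.Icc 0 T, HasDerivAt gl (gl' t) t)
    (hhlD : ∀ t ∈ Set.Icc 0 T, HasDerivAt hl (hl' t) t)
    (hgb' : ∀ t ∈ Set.Icc 0 T, gb' t ≤ 0) (hhb' : ∀ t ∈ Set.Icc 0 T, 0 ≤ hb' t)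
    (hgl' : ∀ t ∈ Set.Icc 0 T, gl' t ≤ 0) (hhl' : ∀ t ∈ Set.Icc 0 T, 0 ≤ hl' t)
    -- ū, u̲: nonnegative, bounded, continuous
    (hub_nonneg : ∀ t ∈ Set.Icc 0 T, ∀ x : ℝ, 0 ≤ ub t x)
    (hul_nonneg : ∀ t ∈ Set.Icc 0 T, ∀ x : ℝ, 0 ≤ ul t x)
    (hub_bdd : ∃ C, ∀ t x, ub t x ≤ C) (hul_bdd : ∃ C, ∀ t x, ul t x ≤ C)
    (hub_cont : ContinuousOn (fun p : ℝ × ℝ => ub p.1 p.2) (Set.Icc 0 T ×ˢ Set.univ))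
    (hul_cont : ContinuousOn (fun p : ℝ × ℝ => ul p.1 p.2) (Set.Icc 0 T ×ˢ Set.univ))
    -- (i) (ū, ḡ, h̄) is an upper solution
    (hub_eq : ∀ t ∈ Set.Ioc 0 T, ∀ x ∈ Set.Ioo (gb t) (hb t),
      ∃ D, HasDerivAt (fun s => ub s x) D t ∧
        d₁ * (∫ y in gb t..hb t, J₁ (x - y) * ub t y) - d₁ * ub t x
          + ub t x * (m t x - ub t x) ≤ D)
    (hub_out : ∀ t ∈ Set.Icc 0 T, ∀ x : ℝ, x ∉ Set.Ioo (gb t) (hb t) → 0 ≤ ub t x)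
    (hhb_ineq : ∀ t ∈ Set.Ioc 0 T,
      μ * (∫ x in gb t..hb t, (∫ y in Set.Ioi (hb t), J₁ (x - y)) * ub t x) ≤ hb' t)
    (hgb_ineq : ∀ t ∈ Set.Ioc 0 T,
      gb' t ≤ -(μ * ∫ x in gb t..hb t, (∫ y in Set.Iio (gb t), J₁ (x - y)) * ub t x))
    -- (ii) (u̲, g̲, h̲) is a lower solution
    (hul_eq : ∀ t ∈ Set.Ioc 0 T, ∀ x ∈ Set.Ioo (gl t) (hl t),
      ∃ D, HasDerivAt (fun s => ul s x) D t ∧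
        D ≤ d₁ * (∫ y in gl t..hl t, J₁ (x - y) * ul t y) - d₁ * ul t x
          + ul t x * (m t x - ul t x))
    (hul_out : ∀ t ∈ Set.Icc 0 T, ∀ x : ℝ, x ∉ Set.Ioo (gl t) (hl t) → ul t x = 0)
    (hhl_ineq : ∀ t ∈ Set.Ioc 0 T,
      hl' t ≤ μ * ∫ x in gl t..hl t, (∫ y in Set.Ioi (hl t), J₁ (x - y)) * ul t x)
    (hgl_ineq : ∀ t ∈ Set.Ioc 0 T,
      -(μ * ∫ x in gl t..hl t, (∫ y in Set.Iio (gl t), J₁ (x - y)) * ul t x) ≤ gl' t)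
    -- (iii) ordering at t = 0
    (hinit_g : gb 0 ≤ gl 0) (hinit_h : hl 0 ≤ hb 0)
    (hinit_u : ∀ x ∈ Set.Icc (gl 0) (hl 0), ul 0 x ≤ ub 0 x) :
    (∀ t ∈ Set.Icc 0 T, gb t ≤ gl t ∧ hl t ≤ hb t) ∧
    (∀ t ∈ Set.Icc 0 T, ∀ x ∈ Set.Icc (gl t) (hl t), ul t x ≤ ub t x) := by
  classical
  obtain ⟨Jc, ⟨Jb, hJb⟩, _Jsymm, Jnn, J0pos, Jint1⟩ := hJ
  have hJint : Integrable J₁ := by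
    by_contra h
    rw [MeasureTheory.integral_undef h] at Jint1
    norm_num at Jint1
  have hJb0 : 0 < Jb := lt_of_lt_of_le J0pos (hJb 0)
  obtain ⟨Km₀, hKm₀⟩ := hm_bdd
  set Km : ℝ := max Km₀ 0 with hKmdef
  have hKm : ∀ t x, m t x ≤ Km :=
    fun t x => le_trans (le_trans (le_abs_self _) (hKm₀ t x)) (le_max_left _ _)
  have hKm0 : (0:ℝ) ≤ Km := le_max_right _ _
  obtain ⟨Cb, hCb⟩ := hub_bdd
  obtain ⟨Cl, hCl⟩ := hul_bdd
  set M : ℝ := max (max Cb Cl) 0 + 1 with hMdef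
  have hMub : ∀ t x, ub t x ≤ M := by
    intro t x
    have h1 := hCb t x
    have h2 := le_max_left Cb Cl
    have h3 := le_max_left (max Cb Cl) 0
    simp only [hMdef]; linarith
  have hMul : ∀ t x, ul t x ≤ M := by
    intro t x
    have h1 := hCl t x
    have h2 := le_max_right Cb Cl
    have h3 := le_max_left (max Cb Cl) 0
    simp only [hMdef]; linarith
  have hMpos : (0:ℝ) < M := by
    have := le_max_right (max Cb Cl) 0
    simp only [hMdef]; linarith
  have hT0 : (0:ℝ) ≤ T := hT.le
  -- time clamp
  set τ : ℝ → ℝ := fun s => max 0 (min T s) with hτdef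
  have hτ_mem : ∀ s, τ s ∈ Set.Icc 0 T :=
    fun s => ⟨le_max_left _ _, max_le hT0 (min_le_left _ _)⟩
  have hτ_id : ∀ s ∈ Set.Icc 0 T, τ s = s := by
    intro s hs
    simp only [hτdef]
    rw [min_eq_right hs.2, max_eq_right hs.1]
  have hτ_cont : Continuous τ := continuous_const.max (continuous_const.min continuous_id)
  have hτ_mono : Monotone τ := fun a b h => max_le_max le_rfl (min_le_min le_rfl h)
  have hτ_ev : ∀ s ∈ Set.Ioo (0:ℝ) T, τ =ᶠ[𝓝 s] id := by
    intro s hs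
    filter_upwards [isOpen_Ioo.mem_nhds hs] with u hu
    exact hτ_id u ⟨hu.1.le, hu.2.le⟩
  -- clamped functions
  set gbc : ℝ → ℝ := fun s => gb (τ s) with hgbcdef
  set hbc : ℝ → ℝ := fun s => hb (τ s) with hhbcdef
  set glc : ℝ → ℝ := fun s => gl (τ s) with hglcdef
  set hlc : ℝ → ℝ := fun s => hl (τ s) with hhlcdef
  set ulc : ℝ → ℝ → ℝ := fun s x => ul (τ s) x with hulcdef
  set ubc : ℝ → ℝ → ℝ := fun s x => ub (τ s) x with hubcdef
  have hgbCo : ContinuousOn gb (Set.Icc 0 T) :=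
    fun t ht => ((hgbD t ht).continuousAt).continuousWithinAt
  have hhbCo : ContinuousOn hb (Set.Icc 0 T) :=
    fun t ht => ((hhbD t ht).continuousAt).continuousWithinAt
  have hglCo : ContinuousOn gl (Set.Icc 0 T) :=
    fun t ht => ((hglD t ht).continuousAt).continuousWithinAt
  have hhlCo : ContinuousOn hl (Set.Icc 0 T) :=
    fun t ht => ((hhlD t ht).continuousAt).continuousWithinAt
  have hgbc_cont : Continuous gbc := hgbCo.comp_continuous hτ_cont hτ_mem
  have hhbc_cont : Continuous hbc := hhbCo.comp_continuous hτ_cont hτ_mem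
  have hglc_cont : Continuous glc := hglCo.comp_continuous hτ_cont hτ_mem
  have hhlc_cont : Continuous hlc := hhlCo.comp_continuous hτ_cont hτ_mem
  have hulc_cont : Continuous fun p : ℝ × ℝ => ulc p.1 p.2 := by
    have := hul_cont.comp_continuous
      ((hτ_cont.comp continuous_fst).prodMk continuous_snd)
      (fun p => ⟨hτ_mem p.1, Set.mem_univ _⟩)
    exact this
  have hubc_cont : Continuous fun p : ℝ × ℝ => ubc p.1 p.2 := by
    have := hub_cont.comp_continuous
      ((hτ_cont.comp continuous_fst).prodMk continuous_snd)
      (fun p => ⟨hτ_mem p.1, Set.mem_univ _⟩)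
    exact this
  have hulcx : ∀ x, Continuous fun s => ulc s x :=
    fun x => hulc_cont.comp (continuous_id.prodMk continuous_const)
  have hubcx : ∀ x, Continuous fun s => ubc s x :=
    fun x => hubc_cont.comp (continuous_id.prodMk continuous_const)
  have hul0' : ∀ s x, 0 ≤ ulc s x := fun s x => hul_nonneg _ (hτ_mem s) x
  have hub0' : ∀ s x, 0 ≤ ubc s x := fun s x => hub_nonneg _ (hτ_mem s) x
  have hulM : ∀ s x, ulc s x ≤ M := fun s x => hMul _ x
  have hubM : ∀ s x, ubc s x ≤ M := fun s x => hMub _ x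
  -- monotonicity of boundaries
  have hgb_anti : AntitoneOn gb (Set.Icc 0 T) := by
    apply antitoneOn_of_deriv_nonpos (convex_Icc 0 T) hgbCo
    · intro s hs; rw [interior_Icc] at hs
      exact (hgbD s ⟨hs.1.le, hs.2.le⟩).differentiableAt.differentiableWithinAt
    · intro s hs; rw [interior_Icc] at hs
      rw [(hgbD s ⟨hs.1.le, hs.2.le⟩).deriv]
      exact hgb' s ⟨hs.1.le, hs.2.le⟩
  have hglc_anti' : AntitoneOn gl (Set.Icc 0 T) := by
    apply antitoneOn_of_deriv_nonpos (convex_Icc 0 T) hglCo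
    · intro s hs; rw [interior_Icc] at hs
      exact (hglD s ⟨hs.1.le, hs.2.le⟩).differentiableAt.differentiableWithinAt
    · intro s hs; rw [interior_Icc] at hs
      rw [(hglD s ⟨hs.1.le, hs.2.le⟩).deriv]
      exact hgl' s ⟨hs.1.le, hs.2.le⟩
  have hhb_mono : MonotoneOn hb (Set.Icc 0 T) := by
    apply monotoneOn_of_deriv_nonneg (convex_Icc 0 T) hhbCo
    · intro s hs; rw [interior_Icc] at hs
      exact (hhbD s ⟨hs.1.le, hs.2.le⟩).differentiableAt.differentiableWithinAt
    · intro s hs; rw [interior_Icc] at hs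
      rw [(hhbD s ⟨hs.1.le, hs.2.le⟩).deriv]
      exact hhb' s ⟨hs.1.le, hs.2.le⟩
  have hhl_mono : MonotoneOn hl (Set.Icc 0 T) := by
    apply monotoneOn_of_deriv_nonneg (convex_Icc 0 T) hhlCo
    · intro s hs; rw [interior_Icc] at hs
      exact (hhlD s ⟨hs.1.le, hs.2.le⟩).differentiableAt.differentiableWithinAt
    · intro s hs; rw [interior_Icc] at hs
      rw [(hhlD s ⟨hs.1.le, hs.2.le⟩).deriv]
      exact hhl' s ⟨hs.1.le, hs.2.le⟩
  have hgbc_anti : Antitone gbc :=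
    fun s1 s2 h => hgb_anti (hτ_mem s1) (hτ_mem s2) (hτ_mono h)
  have hglc_anti : Antitone glc :=
    fun s1 s2 h => hglc_anti' (hτ_mem s1) (hτ_mem s2) (hτ_mono h)
  have hhbc_mono : Monotone hbc :=
    fun s1 s2 h => hhb_mono (hτ_mem s1) (hτ_mem s2) (hτ_mono h)
  have hhlc_mono : Monotone hlc :=
    fun s1 s2 h => hhl_mono (hτ_mem s1) (hτ_mem s2) (hτ_mono h)
  -- ambient interval
  set a₀ : ℝ := min (gl T) (gb T) with ha₀def
  set b₀ : ℝ := max (hl T) (hb T) with hb₀def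
  have hTIcc : T ∈ Set.Icc 0 T := ⟨hT0, le_rfl⟩
  have hglcT : ∀ s, gl T ≤ glc s := fun s => hglc_anti' (hτ_mem s) hTIcc (hτ_mem s).2
  have hgbcT : ∀ s, gb T ≤ gbc s := fun s => hgb_anti (hτ_mem s) hTIcc (hτ_mem s).2
  have hhlcT : ∀ s, hlc s ≤ hl T := fun s => hhl_mono (hτ_mem s) hTIcc (hτ_mem s).2
  have hhbcT : ∀ s, hbc s ≤ hb T := fun s => hhb_mono (hτ_mem s) hTIcc (hτ_mem s).2
  have hglc_lt : ∀ s, glc s < hlc s := fun s => hglhl _ (hτ_mem s)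
  have hgbc_lt : ∀ s, gbc s < hbc s := fun s => hgbhb _ (hτ_mem s)
  have hsubL : ∀ s, Set.Ioc (glc s) (hlc s) ⊆ Set.Icc a₀ b₀ := by
    intro s x hx
    exact ⟨le_trans (min_le_left _ _) (le_trans (hglcT s) hx.1.le),
      le_trans hx.2 (le_trans (hhlcT s) (le_max_left _ _))⟩
  have hsubB : ∀ s, Set.Ioc (gbc s) (hbc s) ⊆ Set.Icc a₀ b₀ := by
    intro s x hx
    exact ⟨le_trans (min_le_right _ _) (le_trans (hgbcT s) hx.1.le),
      le_trans hx.2 (le_trans (hhbcT s) (le_max_right _ _))⟩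
  have ha₀b₀ : a₀ ≤ b₀ :=
    le_trans (min_le_left _ _) (le_trans (hglhl T hTIcc).le (le_max_left _ _))
  set L : ℝ := b₀ - a₀ with hLdef
  have hL0 : (0:ℝ) ≤ L := sub_nonneg.2 ha₀b₀
  -- the comparison density q and its integral G
  set q : ℝ → ℝ → ℝ := fun s x =>
    max (ulc s x - Set.indicator (Set.Ioo (gbc s) (hbc s)) (fun x' => ubc s x') x) 0 with hqdef
  have hind_nonneg : ∀ s x,
      0 ≤ Set.indicator (Set.Ioo (gbc s) (hbc s)) (fun x' => ubc s x') x :=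
    fun s x => Set.indicator_nonneg (fun y _ => hub0' s y) x
  have hq_nonneg : ∀ s x, 0 ≤ q s x := fun s x => le_max_right _ _
  have hq_le_ul : ∀ s x, q s x ≤ ulc s x := by
    intro s x
    apply max_le _ (hul0' s x)
    have := hind_nonneg s x
    linarith
  have hul_le : ∀ s x,
      ulc s x ≤ q s x + Set.indicator (Set.Ioo (gbc s) (hbc s)) (fun x' => ubc s x') x := by
    intro s x
    have := le_max_left (ulc s x - Set.indicator (Set.Ioo (gbc s) (hbc s))
      (fun x' => ubc s x') x) 0
    simp only [hqdef]
    linarith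
  have hulout' : ∀ s x, x ∉ Set.Ioo (glc s) (hlc s) → ulc s x = 0 :=
    fun s x hx => hul_out _ (hτ_mem s) x hx
  have hq_out : ∀ s x, x ∉ Set.Ioo (glc s) (hlc s) → q s x = 0 := by
    intro s x hx
    have h0 : ulc s x = 0 := hulout' s x hx
    simp only [hqdef, h0, zero_sub]
    apply max_eq_right
    simp only [neg_nonpos]
    exact hind_nonneg s x
  have hq_in : ∀ s x, x ∈ Set.Ioo (gbc s) (hbc s) → q s x = max (ulc s x - ubc s x) 0 := by
    intro s x hx
    simp only [hqdef]
    rw [Set.indicator_of_mem hx]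
  have hq_notin : ∀ s x, x ∉ Set.Ioo (gbc s) (hbc s) → q s x = ulc s x := by
    intro s x hx
    simp only [hqdef]
    rw [Set.indicator_of_notMem hx, sub_zero]
    exact max_eq_left (hul0' s x)
  have hτ0 : τ 0 = 0 := hτ_id 0 ⟨le_rfl, hT0⟩
  have hq0 : ∀ x, q 0 x = 0 := by
    intro x
    by_cases hx : x ∈ Set.Ioo (glc 0) (hlc 0)
    · have hgbgl : gbc 0 ≤ glc 0 := by
        simp only [hgbcdef, hglcdef, hτ0]; exact hinit_g
      have hhlhb : hlc 0 ≤ hbc 0 := by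
        simp only [hhbcdef, hhlcdef, hτ0]; exact hinit_h
      have hxb : x ∈ Set.Ioo (gbc 0) (hbc 0) :=
        ⟨lt_of_le_of_lt hgbgl hx.1, lt_of_lt_of_le hx.2 hhlhb⟩
      rw [hq_in 0 x hxb]
      have hle : ulc 0 x ≤ ubc 0 x := by
        simp only [hulcdef, hubcdef, hτ0]
        apply hinit_u x
        have hx' : x ∈ Set.Ioo (gl 0) (hl 0) := by
          simpa only [hglcdef, hhlcdef, hτ0] using hx
        exact ⟨hx'.1.le, hx'.2.le⟩
      apply max_eq_right
      linarith
    · exact hq_out 0 x hx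
  -- measurability and integrability of q
  have hOpenB : IsOpen {p : ℝ × ℝ | p.2 ∈ Set.Ioo (gbc p.1) (hbc p.1)} := by
    have h1 : IsOpen {p : ℝ × ℝ | gbc p.1 < p.2} :=
      isOpen_lt (hgbc_cont.comp continuous_fst) continuous_snd
    have h2 : IsOpen {p : ℝ × ℝ | p.2 < hbc p.1} :=
      isOpen_lt continuous_snd (hhbc_cont.comp continuous_fst)
    exact h1.inter h2
  have hq_prod_meas : Measurable fun p : ℝ × ℝ => q p.1 p.2 := by
    simp only [hqdef]
    apply Measurable.max _ measurable_const
    apply Measurable.sub hulc_cont.measurable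
    have h2 : (fun p : ℝ × ℝ =>
        Set.indicator (Set.Ioo (gbc p.1) (hbc p.1)) (fun x' => ubc p.1 x') p.2)
        = Set.indicator {p : ℝ × ℝ | p.2 ∈ Set.Ioo (gbc p.1) (hbc p.1)}
            (fun p : ℝ × ℝ => ubc p.1 p.2) := by
      ext p
      by_cases h : p.2 ∈ Set.Ioo (gbc p.1) (hbc p.1)
      · rw [Set.indicator_of_mem h (fun x' => ubc p.1 x')]
        exact (Set.indicator_of_mem
          (show p ∈ {p : ℝ × ℝ | p.2 ∈ Set.Ioo (gbc p.1) (hbc p.1)} from h)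
          (fun p : ℝ × ℝ => ubc p.1 p.2)).symm
      · rw [Set.indicator_of_notMem h (fun x' => ubc p.1 x')]
        exact (Set.indicator_of_notMem
          (show p ∉ {p : ℝ × ℝ | p.2 ∈ Set.Ioo (gbc p.1) (hbc p.1)} from h)
          (fun p : ℝ × ℝ => ubc p.1 p.2)).symm
    rw [h2]
    exact hubc_cont.measurable.indicator hOpenB.measurableSet
  have hq_meas : ∀ s, Measurable (q s) :=
    fun s => hq_prod_meas.comp (measurable_const.prodMk measurable_id)
  have hindint : Integrable (Set.indicator (Set.Icc a₀ b₀) fun _ : ℝ => M) :=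
    IntegrableOn.integrable_indicator
      (integrableOn_const (measure_Icc_lt_top).ne) measurableSet_Icc
  have hq_bd_ind : ∀ s x, q s x ≤ Set.indicator (Set.Icc a₀ b₀) (fun _ => M) x := by
    intro s x
    by_cases hx : x ∈ Set.Ioo (glc s) (hlc s)
    · have hmem : x ∈ Set.Icc a₀ b₀ := hsubL s (Set.Ioo_subset_Ioc_self hx)
      rw [Set.indicator_of_mem hmem]
      exact (hq_le_ul s x).trans (hulM s x)
    · rw [hq_out s x hx]
      exact Set.indicator_nonneg (fun y _ => hMpos.le) x
  have hq_int : ∀ s, Integrable (q s) := by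
    intro s
    apply Integrable.mono' hindint (hq_meas s).aestronglyMeasurable
    apply Filter.Eventually.of_forall
    intro x
    rw [Real.norm_eq_abs, abs_of_nonneg (hq_nonneg s x)]
    exact hq_bd_ind s x
  set G : ℝ → ℝ := fun s => ∫ x, q s x with hGdef
  have hG_nonneg : ∀ s, 0 ≤ G s := fun s => integral_nonneg (hq_nonneg s)
  have hLIcc : (volume (Set.Icc a₀ b₀)).toReal = L := by
    rw [Real.volume_Icc, ENNReal.toReal_ofReal hL0]
  have hG_le : ∀ s, G s ≤ M * L := by
    intro s
    have h1 : G s ≤ ∫ x, Set.indicator (Set.Icc a₀ b₀) (fun _ => M) x :=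
      integral_mono (hq_int s) hindint (hq_bd_ind s)
    rwa [MeasureTheory.integral_indicator_const (M : ℝ) measurableSet_Icc,
      MeasureTheory.measureReal_def, hLIcc,
      smul_eq_mul, mul_comm] at h1
  -- a.e. continuity in time of q, continuity of G
  have hq_ae : ∀ s₀ : ℝ, ∀ᵐ x : ℝ, Filter.Tendsto (fun s => q s x) (𝓝 s₀) (𝓝 (q s₀ x)) := by
    intro s₀
    have hae0 : ∀ᵐ x : ℝ, x ≠ gbc s₀ ∧ x ≠ hbc s₀ := by
      have h1 : (volume : Measure ℝ) ({gbc s₀} ∪ {hbc s₀}) = 0 :=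
        measure_union_null (measure_singleton _) (measure_singleton _)
      have h2 := Filter.eventually_iff.2 (MeasureTheory.compl_mem_ae_iff.2 h1)
      filter_upwards [h2] with x hx
      simp only [Set.mem_compl_iff, Set.mem_union, Set.mem_singleton_iff, not_or] at hx
      exact hx
    filter_upwards [hae0] with x hx
    obtain ⟨hx1, hx2⟩ := hx
    by_cases hmem : x ∈ Set.Ioo (gbc s₀) (hbc s₀)
    · have hev : ∀ᶠ s in 𝓝 s₀, q s x = max (ulc s x - ubc s x) 0 := by
        have e1 : ∀ᶠ s in 𝓝 s₀, gbc s < x := (hgbc_cont.tendsto s₀).eventually_lt_const hmem.1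
        have e2 : ∀ᶠ s in 𝓝 s₀, x < hbc s := (hhbc_cont.tendsto s₀).eventually_const_lt hmem.2
        filter_upwards [e1, e2] with s h1 h2
        exact hq_in s x ⟨h1, h2⟩
      have hcont : Filter.Tendsto (fun s => max (ulc s x - ubc s x) 0) (𝓝 s₀)
          (𝓝 (max (ulc s₀ x - ubc s₀ x) 0)) :=
        (((hulcx x).sub (hubcx x)).max continuous_const).tendsto s₀
      rw [hq_in s₀ x hmem]
      exact hcont.congr' (hev.mono fun s hs => hs.symm)
    · have hmem' : ¬(gbc s₀ < x ∧ x < hbc s₀) := fun hh => hmem hh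
      have hout : x < gbc s₀ ∨ hbc s₀ < x := by
        by_cases h : gbc s₀ < x
        · right
          have h3 : ¬ x < hbc s₀ := fun hh => hmem' ⟨h, hh⟩
          exact lt_of_le_of_ne (not_lt.1 h3) (fun h' => hx2 h'.symm)
        · left
          exact lt_of_le_of_ne (not_lt.1 h) hx1
      have hev : ∀ᶠ s in 𝓝 s₀, q s x = ulc s x := by
        rcases hout with h | h
        · have e1 : ∀ᶠ s in 𝓝 s₀, x < gbc s := (hgbc_cont.tendsto s₀).eventually_const_lt h
          filter_upwards [e1] with s h1
          exact hq_notin s x (fun hmem' => absurd hmem'.1 (not_lt.2 h1.le))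
        · have e1 : ∀ᶠ s in 𝓝 s₀, hbc s < x := (hhbc_cont.tendsto s₀).eventually_lt_const h
          filter_upwards [e1] with s h1
          exact hq_notin s x (fun hmem' => absurd hmem'.2 (not_lt.2 h1.le))
      rw [hq_notin s₀ x hmem]
      exact ((hulcx x).tendsto s₀).congr' (hev.mono fun s hs => hs.symm)
  have hG_cont : Continuous G := by
    apply cont_param_integral (C := M) (a₀ := a₀) (b₀ := b₀)
      (fun s => (hq_meas s).aestronglyMeasurable) _ hq_ae
    intro s x
    rw [abs_of_nonneg (hq_nonneg s x)]
    exact hq_bd_ind s x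
  -- the smoothing integral IQ
  set IQ : ℝ → ℝ → ℝ := fun s x => ∫ y, J₁ (x - y) * q s y with hIQdef
  have hJxy_cont : ∀ x : ℝ, Continuous fun y => J₁ (x - y) :=
    fun x => Jc.comp (continuous_const.sub continuous_id)
  have hJq_bd : ∀ s x y, J₁ (x - y) * q s y ≤ Set.indicator (Set.Icc a₀ b₀) (fun _ => Jb * M) y := by
    intro s x y
    by_cases hy : y ∈ Set.Ioo (glc s) (hlc s)
    · have hmem : y ∈ Set.Icc a₀ b₀ := hsubL s (Set.Ioo_subset_Ioc_self hy)
      rw [Set.indicator_of_mem hmem]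
      have := hq_le_ul s y
      have := hulM s y
      have := hq_nonneg s y
      have := hJb (x - y)
      have := Jnn (x - y)
      nlinarith
    · rw [hq_out s y hy, mul_zero]
      exact Set.indicator_nonneg (fun z _ => by positivity) y
  have hJq_int : ∀ s x, Integrable fun y => J₁ (x - y) * q s y := by
    intro s x
    apply Integrable.mono'
      (IntegrableOn.integrable_indicator
        (integrableOn_const (C := Jb * M) (measure_Icc_lt_top).ne) measurableSet_Icc)
      (((hJxy_cont x).measurable).mul (hq_meas s)).aestronglyMeasurable
    apply Filter.Eventually.of_forall
    intro y
    rw [Real.norm_eq_abs, Pi.mul_apply, abs_of_nonneg (mul_nonneg (Jnn _) (hq_nonneg s y))]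
    exact hJq_bd s x y
  have hIQ_nonneg : ∀ s x, 0 ≤ IQ s x :=
    fun s x => integral_nonneg fun y => mul_nonneg (Jnn _) (hq_nonneg s y)
  have hIQ_le : ∀ s x, IQ s x ≤ Jb * G s := by
    intro s x
    have h1 : IQ s x ≤ ∫ y, Jb * q s y := by
      apply integral_mono (hJq_int s x) ((hq_int s).const_mul Jb)
      intro y
      exact mul_le_mul_of_nonneg_right (hJb _) (hq_nonneg s y)
    rwa [MeasureTheory.integral_const_mul] at h1
  have hIQx_cont : ∀ x, Continuous fun s => IQ s x := by
    intro x
    apply cont_param_integral (C := Jb * M) (a₀ := a₀) (b₀ := b₀)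
      (fun s => (((hJxy_cont x).measurable).mul (hq_meas s)).aestronglyMeasurable)
    · intro s y
      rw [Pi.mul_apply, abs_of_nonneg (mul_nonneg (Jnn _) (hq_nonneg s y))]
      exact hJq_bd s x y
    · intro s₀
      filter_upwards [hq_ae s₀] with y hy
      exact tendsto_const_nhds.mul hy
  have hIQ_meas_x : ∀ s, Measurable fun x => IQ s x := by
    intro s
    apply meas_param_full
    exact ((Jc.comp (continuous_fst.sub continuous_snd)).measurable).mul
      ((hq_meas s).comp measurable_snd)
  -- facts about the boundary kernels
  have hAint : ∀ x : ℝ, Integrable fun y => J₁ (x - y) := fun x => hJint.comp_sub_left x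
  have hAone : ∀ x : ℝ, (∫ y, J₁ (x - y)) = 1 := by
    intro x
    rw [integral_sub_left_eq_self J₁ volume x]
    exact Jint1
  have hAone' : ∀ y : ℝ, (∫ x, J₁ (x - y)) = 1 := by
    intro y
    rw [integral_sub_right_eq_self J₁ y]
    exact Jint1
  have hAle1 : ∀ (S : Set ℝ) (x : ℝ), (∫ y in S, J₁ (x - y)) ≤ 1 := by
    intro S x
    rw [← hAone x]
    exact setIntegral_le_integral (hAint x) (Filter.Eventually.of_forall fun y => Jnn _)
  have hAle1' : ∀ (S : Set ℝ) (y : ℝ), (∫ x in S, J₁ (x - y)) ≤ 1 := by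
    intro S y
    rw [← hAone' y]
    exact setIntegral_le_integral (hJint.comp_sub_right y)
      (Filter.Eventually.of_forall fun x => Jnn _)
  have hA_mono_Ioi : ∀ (h1 h2 x : ℝ), h1 ≤ h2 →
      (∫ y in Set.Ioi h2, J₁ (x - y)) ≤ ∫ y in Set.Ioi h1, J₁ (x - y) := by
    intro h1 h2 x h
    exact setIntegral_mono_set (hAint x).integrableOn
      (Filter.Eventually.of_forall fun y => Jnn _)
      (HasSubset.Subset.eventuallyLE (Set.Ioi_subset_Ioi h))
  have hA_mono_Iio : ∀ (g1 g2 x : ℝ), g1 ≤ g2 →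
      (∫ y in Set.Iio g1, J₁ (x - y)) ≤ ∫ y in Set.Iio g2, J₁ (x - y) := by
    intro g1 g2 x h
    exact setIntegral_mono_set (hAint x).integrableOn
      (Filter.Eventually.of_forall fun y => Jnn _)
      (HasSubset.Subset.eventuallyLE (Set.Iio_subset_Iio h))
  have hA_nonneg : ∀ (S : Set ℝ) (hS : MeasurableSet S) (x : ℝ),
      0 ≤ ∫ y in S, J₁ (x - y) :=
    fun S hS x => setIntegral_nonneg hS (fun y _ => Jnn _)
  have hgbc_ge : ∀ s, a₀ ≤ gbc s := fun s => le_trans (min_le_right _ _) (hgbcT s)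
  have hhbc_le : ∀ s, hbc s ≤ b₀ := fun s => le_trans (hhbcT s) (le_max_right _ _)
  have hglc_ge : ∀ s, a₀ ≤ glc s := fun s => le_trans (min_le_left _ _) (hglcT s)
  have hhlc_le : ∀ s, hlc s ≤ b₀ := fun s => le_trans (hhlcT s) (le_max_left _ _)
  have hulcs : ∀ s, Continuous fun x => ulc s x :=
    fun s => hulc_cont.comp (continuous_const.prodMk continuous_id)
  have hubcs : ∀ s, Continuous fun x => ubc s x :=
    fun s => hubc_cont.comp (continuous_const.prodMk continuous_id)
  -- the indicator function vb
  have hvb_intOn : ∀ s, IntegrableOn (fun y => ubc s y) (Set.Ioo (gbc s) (hbc s)) :=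
    fun s => ((hubcs s).integrableOn_Icc).mono_set Set.Ioo_subset_Icc_self
  have hvb_int : ∀ s, Integrable
      (fun y => Set.indicator (Set.Ioo (gbc s) (hbc s)) (fun x' => ubc s x') y) :=
    fun s => (hvb_intOn s).integrable_indicator measurableSet_Ioo
  have hvb_val : ∀ s,
      (∫ y, Set.indicator (Set.Ioo (gbc s) (hbc s)) (fun x' => ubc s x') y) ≤ M * L := by
    intro s
    rw [MeasureTheory.integral_indicator measurableSet_Ioo]
    have h1 : (∫ y in Set.Ioo (gbc s) (hbc s), ubc s y)
        ≤ ∫ _y in Set.Ioo (gbc s) (hbc s), M :=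
      setIntegral_mono_on (hvb_intOn s)
        (integrableOn_const (measure_Ioo_lt_top).ne) measurableSet_Ioo
        (fun y _ => hubM s y)
    have h2 : (∫ _y in Set.Ioo (gbc s) (hbc s), M)
        = (hbc s - gbc s) * M := by
      rw [MeasureTheory.setIntegral_const, MeasureTheory.measureReal_def, Real.volume_Ioo, smul_eq_mul,
        ENNReal.toReal_ofReal (by linarith [hgbc_lt s])]
    have h3 : hbc s - gbc s ≤ L := by
      have := hgbc_ge s
      have := hhbc_le s
      simp only [hLdef]
      linarith
    calc (∫ y in Set.Ioo (gbc s) (hbc s), ubc s y) ≤ (hbc s - gbc s) * M := by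
          rw [← h2]; exact h1
      _ ≤ M * L := by nlinarith
  have hq_ge_sub : ∀ s y, ulc s y - ubc s y ≤ q s y := by
    intro s y
    by_cases h : y ∈ Set.Ioo (gbc s) (hbc s)
    · rw [hq_in _ _ h]; exact le_max_left _ _
    · rw [hq_notin _ _ h]; linarith [hub0' s y]
  -- key comparison of the two interior nonlocal integrals
  have hJul_intOn : ∀ s x, IntegrableOn (fun y => J₁ (x - y) * ulc s y)
      (Set.Ioc (glc s) (hlc s)) :=
    fun s x => (((hJxy_cont x).mul (hulcs s)).integrableOn_Icc).mono_set
      Set.Ioc_subset_Icc_self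
  have hJub_intOn : ∀ s x, IntegrableOn (fun y => J₁ (x - y) * ubc s y)
      (Set.Ioc (gbc s) (hbc s)) :=
    fun s x => (((hJxy_cont x).mul (hubcs s)).integrableOn_Icc).mono_set
      Set.Ioc_subset_Icc_self
  have hkey_int : ∀ s x, (∫ y in Set.Ioc (glc s) (hlc s), J₁ (x - y) * ulc s y)
      - (∫ y in Set.Ioc (gbc s) (hbc s), J₁ (x - y) * ubc s y) ≤ IQ s x := by
    intro s x
    have hIl := (hJul_intOn s x).integrable_indicator measurableSet_Ioc
    have hIb := (hJub_intOn s x).integrable_indicator measurableSet_Ioc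
    rw [← MeasureTheory.integral_indicator measurableSet_Ioc,
      ← MeasureTheory.integral_indicator measurableSet_Ioc,
      ← MeasureTheory.integral_sub hIl hIb]
    apply integral_mono (hIl.sub hIb) (hJq_int s x)
    intro y
    simp only [Pi.sub_apply]
    by_cases h1 : y ∈ Set.Ioc (glc s) (hlc s)
    · rw [Set.indicator_of_mem h1]
      by_cases h2 : y ∈ Set.Ioc (gbc s) (hbc s)
      · rw [Set.indicator_of_mem h2]
        have h3 := hq_ge_sub s y
        have h4 := Jnn (x - y)
        nlinarith
      · rw [Set.indicator_of_notMem h2]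
        have h5 : y ∉ Set.Ioo (gbc s) (hbc s) :=
          fun hy => h2 (Set.Ioo_subset_Ioc_self hy)
        rw [sub_zero]
        rw [hq_notin s y h5]
    · rw [Set.indicator_of_notMem h1, zero_sub]
      by_cases h2 : y ∈ Set.Ioc (gbc s) (hbc s)
      · rw [Set.indicator_of_mem h2]
        have := mul_nonneg (Jnn (x - y)) (hub0' s y)
        have := mul_nonneg (Jnn (x - y)) (hq_nonneg s y)
        linarith
      · rw [Set.indicator_of_notMem h2]
        simpa using mul_nonneg (Jnn (x - y)) (hq_nonneg s y)
  -- phase 1 derivative bound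
  have hchainL : ∀ s ∈ Set.Ioo (0:ℝ) T, ∀ x : ℝ,
      d₁ * (∫ y in gl s..hl s, J₁ (x - y) * ul s y) - d₁ * ul s x
        + ul s x * (m s x - ul s x)
        ≤ d₁ * (Jb * G s + Jb * (M * L)) + Km * ulc s x := by
    intro s hs x
    have hτs : τ s = s := hτ_id s ⟨hs.1.le, hs.2.le⟩
    have hIJ : (∫ y in gl s..hl s, J₁ (x - y) * ul s y)
        = ∫ y in Set.Ioc (glc s) (hlc s), J₁ (x - y) * ulc s y := by
      rw [intervalIntegral.integral_of_le (hglhl s ⟨hs.1.le, hs.2.le⟩).le]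
      simp only [hglcdef, hhlcdef, hulcdef, hτs]
    have hmono1 : (∫ y in Set.Ioc (glc s) (hlc s), J₁ (x - y) * ulc s y)
        ≤ Jb * G s + Jb * (M * L) := by
      have hstep : (∫ y in Set.Ioc (glc s) (hlc s), J₁ (x - y) * ulc s y)
          ≤ ∫ y in Set.Ioc (glc s) (hlc s),
              (J₁ (x - y) * q s y + Jb * Set.indicator (Set.Ioo (gbc s) (hbc s))
                (fun x' => ubc s x') y) := by
        apply setIntegral_mono_on (hJul_intOn s x) _ measurableSet_Ioc
        · intro y _
          have h1 := hul_le s y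
          have h2 := Jnn (x - y)
          have h3 := hJb (x - y)
          have h4 := hind_nonneg s y
          nlinarith
        · exact ((hJq_int s x).add ((hvb_int s).const_mul Jb)).integrableOn
      have hstep2 : (∫ y in Set.Ioc (glc s) (hlc s),
          (J₁ (x - y) * q s y + Jb * Set.indicator (Set.Ioo (gbc s) (hbc s))
            (fun x' => ubc s x') y))
          ≤ (∫ y, J₁ (x - y) * q s y)
            + Jb * ∫ y, Set.indicator (Set.Ioo (gbc s) (hbc s)) (fun x' => ubc s x') y := by
        rw [MeasureTheory.integral_add ((hJq_int s x).integrableOn)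
          (((hvb_int s).const_mul Jb).integrableOn)]
        apply add_le_add
        · exact setIntegral_le_integral (hJq_int s x)
            (Filter.Eventually.of_forall fun y => mul_nonneg (Jnn _) (hq_nonneg s y))
        · rw [← MeasureTheory.integral_const_mul]
          exact setIntegral_le_integral ((hvb_int s).const_mul Jb)
            (Filter.Eventually.of_forall fun y =>
              mul_nonneg hJb0.le (hind_nonneg s y))
      have h5 := hIQ_le s x
      have h6 := hvb_val s
      have h7 : Jb * (∫ y, Set.indicator (Set.Ioo (gbc s) (hbc s)) (fun x' => ubc s x') y)
          ≤ Jb * (M * L) := mul_le_mul_of_nonneg_left h6 hJb0.le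
      calc (∫ y in Set.Ioc (glc s) (hlc s), J₁ (x - y) * ulc s y)
          ≤ _ := hstep
        _ ≤ _ := hstep2
        _ ≤ Jb * G s + Jb * (M * L) := by
            have : (∫ y, J₁ (x - y) * q s y) = IQ s x := rfl
            rw [this]; linarith
    have hulx : ulc s x = ul s x := by simp only [hulcdef, hτs]
    have hmK := hKm s x
    have hul0x : 0 ≤ ul s x := hul_nonneg s ⟨hs.1.le, hs.2.le⟩ x
    rw [hIJ, hulx]
    have hd1 : d₁ * (∫ y in Set.Ioc (glc s) (hlc s), J₁ (x - y) * ulc s y)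
        ≤ d₁ * (Jb * G s + Jb * (M * L)) := mul_le_mul_of_nonneg_left hmono1 hd₁.le
    have h8 : ul s x * (m s x - ul s x) ≤ Km * ul s x := by nlinarith
    have h9 : 0 ≤ d₁ * ul s x := mul_nonneg hd₁.le hul0x
    linarith
  -- phase 2 derivative bound
  have hchainB : ∀ s ∈ Set.Ioo (0:ℝ) T, ∀ x : ℝ, 0 < ul s x - ub s x →
      (d₁ * (∫ y in gl s..hl s, J₁ (x - y) * ul s y) - d₁ * ul s x
        + ul s x * (m s x - ul s x))
      - (d₁ * (∫ y in gb s..hb s, J₁ (x - y) * ub s y) - d₁ * ub s x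
        + ub s x * (m s x - ub s x))
        ≤ d₁ * IQ s x + Km * max (ulc s x - ubc s x) 0 := by
    intro s hs x hpos
    have hτs : τ s = s := hτ_id s ⟨hs.1.le, hs.2.le⟩
    have hIJ : (∫ y in gl s..hl s, J₁ (x - y) * ul s y)
        = ∫ y in Set.Ioc (glc s) (hlc s), J₁ (x - y) * ulc s y := by
      rw [intervalIntegral.integral_of_le (hglhl s ⟨hs.1.le, hs.2.le⟩).le]
      simp only [hglcdef, hhlcdef, hulcdef, hτs]
    have hIB : (∫ y in gb s..hb s, J₁ (x - y) * ub s y)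
        = ∫ y in Set.Ioc (gbc s) (hbc s), J₁ (x - y) * ubc s y := by
      rw [intervalIntegral.integral_of_le (hgbhb s ⟨hs.1.le, hs.2.le⟩).le]
      simp only [hgbcdef, hhbcdef, hubcdef, hτs]
    have hkey := hkey_int s x
    have hulx : ulc s x = ul s x := by simp only [hulcdef, hτs]
    have hubx : ubc s x = ub s x := by simp only [hubcdef, hτs]
    have hmax : ul s x - ub s x ≤ max (ulc s x - ubc s x) 0 := by
      rw [hulx, hubx]; exact le_max_left _ _
    have hmK := hKm s x
    have hub0x : 0 ≤ ub s x := hub_nonneg s ⟨hs.1.le, hs.2.le⟩ x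
    have hul0x : 0 ≤ ul s x := hul_nonneg s ⟨hs.1.le, hs.2.le⟩ x
    rw [hIJ, hIB]
    have hd1 : d₁ * ((∫ y in Set.Ioc (glc s) (hlc s), J₁ (x - y) * ulc s y)
        - (∫ y in Set.Ioc (gbc s) (hbc s), J₁ (x - y) * ubc s y)) ≤ d₁ * IQ s x :=
      mul_le_mul_of_nonneg_left hkey hd₁.le
    have he1 : ul s x * (m s x - ul s x) - ub s x * (m s x - ub s x)
        = (ul s x - ub s x) * (m s x - ul s x - ub s x) := by ring
    have he2 : (ul s x - ub s x) * (m s x - ul s x - ub s x)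
        ≤ (ul s x - ub s x) * Km := by
      apply mul_le_mul_of_nonneg_left _ hpos.le
      linarith
    have he3 : Km * (ul s x - ub s x) ≤ Km * max (ulc s x - ubc s x) 0 :=
      mul_le_mul_of_nonneg_left hmax hKm0
    have he4 : 0 ≤ d₁ * (ul s x - ub s x) := mul_nonneg hd₁.le hpos.le
    linarith
  -- boundary kernels: measurability
  have hAmeasIoi : ∀ c : ℝ, Measurable fun x => ∫ y in Set.Ioi c, J₁ (x - y) := by
    intro c
    exact meas_param_gen (Jc.comp (continuous_fst.sub continuous_snd)).measurable
      measurableSet_Ioi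
  have hAmeasIio : ∀ c : ℝ, Measurable fun x => ∫ y in Set.Iio c, J₁ (x - y) := by
    intro c
    exact meas_param_gen (Jc.comp (continuous_fst.sub continuous_snd)).measurable
      measurableSet_Iio
  have hIntOnAU : ∀ A : ℝ → ℝ, Measurable A → (∀ x, 0 ≤ A x) → (∀ x, A x ≤ 1) →
      ∀ u : ℝ → ℝ, Continuous u → (∀ x, 0 ≤ u x) → (∀ x, u x ≤ M) →
      ∀ a b : ℝ, IntegrableOn (fun x => A x * u x) (Set.Ioc a b) := by
    intro A hA h0 h1 u hu hu0 huM a b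
    apply Integrable.mono' (g := fun _ => M)
      (integrableOn_const (measure_Ioc_lt_top).ne)
      ((hA.mul hu.measurable).aestronglyMeasurable.restrict)
    apply Filter.Eventually.of_forall
    intro x
    rw [Real.norm_eq_abs, Pi.mul_apply, abs_of_nonneg (mul_nonneg (h0 x) (hu0 x))]
    nlinarith [h0 x, h1 x, hu0 x, huM x]
  -- generic difference bound for the boundary integrals
  have hbdiff : ∀ s : ℝ, ∀ Al Ab : ℝ → ℝ, Measurable Al → Measurable Ab →
      (∀ x, 0 ≤ Al x) → (∀ x, Al x ≤ Ab x) → (∀ x, Ab x ≤ 1) → (∀ x, 0 ≤ Ab x) →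
      (∫ x in Set.Ioc (glc s) (hlc s), Al x * ulc s x)
        - (∫ x in Set.Ioc (gbc s) (hbc s), Ab x * ubc s x) ≤ G s := by
    intro s Al Ab hmAl hmAb h0l hlb hb1 h0b
    have hAl1 : ∀ x, Al x ≤ 1 := fun x => (hlb x).trans (hb1 x)
    have hIl := (hIntOnAU Al hmAl h0l hAl1 (fun x => ulc s x) (hulcs s) (hul0' s)
      (hulM s) (glc s) (hlc s)).integrable_indicator measurableSet_Ioc
    have hIb := (hIntOnAU Ab hmAb h0b hb1 (fun x => ubc s x) (hubcs s) (hub0' s)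
      (hubM s) (gbc s) (hbc s)).integrable_indicator measurableSet_Ioc
    rw [← MeasureTheory.integral_indicator measurableSet_Ioc,
      ← MeasureTheory.integral_indicator measurableSet_Ioc,
      ← MeasureTheory.integral_sub hIl hIb]
    apply integral_mono (hIl.sub hIb) (hq_int s)
    intro x
    simp only [Pi.sub_apply]
    by_cases h1 : x ∈ Set.Ioc (glc s) (hlc s)
    · rw [Set.indicator_of_mem h1]
      by_cases h2 : x ∈ Set.Ioc (gbc s) (hbc s)
      · rw [Set.indicator_of_mem h2]
        have c1 : Al x * ulc s x ≤ Ab x * ulc s x :=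
          mul_le_mul_of_nonneg_right (hlb x) (hul0' s x)
        rcases le_or_gt (ulc s x - ubc s x) 0 with hc | hc
        · have c2 : Ab x * (ulc s x - ubc s x) ≤ 0 :=
            mul_nonpos_of_nonneg_of_nonpos (h0b x) hc
          have c3 := hq_nonneg s x
          nlinarith
        · have c3 : Ab x * (ulc s x - ubc s x) ≤ 1 * (ulc s x - ubc s x) :=
            mul_le_mul_of_nonneg_right (hb1 x) hc.le
          have c4 := hq_ge_sub s x
          nlinarith
      · rw [Set.indicator_of_notMem h2, sub_zero]
        have hnoo : x ∉ Set.Ioo (gbc s) (hbc s) :=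
          fun h => h2 (Set.Ioo_subset_Ioc_self h)
        rw [hq_notin s x hnoo]
        have := mul_le_mul_of_nonneg_right (hAl1 x) (hul0' s x)
        linarith
    · rw [Set.indicator_of_notMem h1, zero_sub]
      by_cases h2 : x ∈ Set.Ioc (gbc s) (hbc s)
      · rw [Set.indicator_of_mem h2]
        have := mul_nonneg (h0b x) (hub0' s x)
        have := hq_nonneg s x
        linarith
      · rw [Set.indicator_of_notMem h2]
        simpa using hq_nonneg s x
  -- boundary derivative bounds
  have hchainH : ∀ s ∈ Set.Ioo (0:ℝ) T, hbc s ≤ hlc s → hl' s - hb' s ≤ μ * G s := by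
    intro s hs hle
    have hτs : τ s = s := hτ_id s ⟨hs.1.le, hs.2.le⟩
    have h1 := hhl_ineq s ⟨hs.1, hs.2.le⟩
    have h2 := hhb_ineq s ⟨hs.1, hs.2.le⟩
    have e1 : (∫ x in gl s..hl s, (∫ y in Set.Ioi (hl s), J₁ (x - y)) * ul s x)
        = ∫ x in Set.Ioc (glc s) (hlc s),
            (∫ y in Set.Ioi (hlc s), J₁ (x - y)) * ulc s x := by
      rw [intervalIntegral.integral_of_le (hglhl s ⟨hs.1.le, hs.2.le⟩).le]
      simp only [hglcdef, hhlcdef, hulcdef, hτs]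
    have e2 : (∫ x in gb s..hb s, (∫ y in Set.Ioi (hb s), J₁ (x - y)) * ub s x)
        = ∫ x in Set.Ioc (gbc s) (hbc s),
            (∫ y in Set.Ioi (hbc s), J₁ (x - y)) * ubc s x := by
      rw [intervalIntegral.integral_of_le (hgbhb s ⟨hs.1.le, hs.2.le⟩).le]
      simp only [hgbcdef, hhbcdef, hubcdef, hτs]
    rw [e1] at h1
    rw [e2] at h2
    have h3 := hbdiff s (fun x => ∫ y in Set.Ioi (hlc s), J₁ (x - y))
      (fun x => ∫ y in Set.Ioi (hbc s), J₁ (x - y)) (hAmeasIoi _) (hAmeasIoi _)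
      (fun x => hA_nonneg _ measurableSet_Ioi x)
      (fun x => hA_mono_Ioi _ _ x hle)
      (fun x => hAle1 _ x)
      (fun x => hA_nonneg _ measurableSet_Ioi x)
    have h4 : μ * ((∫ x in Set.Ioc (glc s) (hlc s),
        (∫ y in Set.Ioi (hlc s), J₁ (x - y)) * ulc s x)
        - (∫ x in Set.Ioc (gbc s) (hbc s),
        (∫ y in Set.Ioi (hbc s), J₁ (x - y)) * ubc s x)) ≤ μ * G s :=
      mul_le_mul_of_nonneg_left h3 hμ.le
    linarith
  have hchainG : ∀ s ∈ Set.Ioo (0:ℝ) T, glc s ≤ gbc s → gb' s - gl' s ≤ μ * G s := by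
    intro s hs hle
    have hτs : τ s = s := hτ_id s ⟨hs.1.le, hs.2.le⟩
    have h1 := hgl_ineq s ⟨hs.1, hs.2.le⟩
    have h2 := hgb_ineq s ⟨hs.1, hs.2.le⟩
    have e1 : (∫ x in gl s..hl s, (∫ y in Set.Iio (gl s), J₁ (x - y)) * ul s x)
        = ∫ x in Set.Ioc (glc s) (hlc s),
            (∫ y in Set.Iio (glc s), J₁ (x - y)) * ulc s x := by
      rw [intervalIntegral.integral_of_le (hglhl s ⟨hs.1.le, hs.2.le⟩).le]
      simp only [hglcdef, hhlcdef, hulcdef, hτs]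
    have e2 : (∫ x in gb s..hb s, (∫ y in Set.Iio (gb s), J₁ (x - y)) * ub s x)
        = ∫ x in Set.Ioc (gbc s) (hbc s),
            (∫ y in Set.Iio (gbc s), J₁ (x - y)) * ubc s x := by
      rw [intervalIntegral.integral_of_le (hgbhb s ⟨hs.1.le, hs.2.le⟩).le]
      simp only [hgbcdef, hhbcdef, hubcdef, hτs]
    rw [e1] at h1
    rw [e2] at h2
    have h3 := hbdiff s (fun x => ∫ y in Set.Iio (glc s), J₁ (x - y))
      (fun x => ∫ y in Set.Iio (gbc s), J₁ (x - y)) (hAmeasIio _) (hAmeasIio _)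
      (fun x => hA_nonneg _ measurableSet_Iio x)
      (fun x => hA_mono_Iio _ _ x hle)
      (fun x => hAle1 _ x)
      (fun x => hA_nonneg _ measurableSet_Iio x)
    have h4 : μ * ((∫ x in Set.Ioc (glc s) (hlc s),
        (∫ y in Set.Iio (glc s), J₁ (x - y)) * ulc s x)
        - (∫ x in Set.Ioc (gbc s) (hbc s),
        (∫ y in Set.Iio (gbc s), J₁ (x - y)) * ubc s x)) ≤ μ * G s :=
      mul_le_mul_of_nonneg_left h3 hμ.le
    linarith
  -- the rate function rho
  set rho : ℝ → ℝ → ℝ := fun s x =>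
    if x ∈ Set.Ioo (gbc s) (hbc s) then d₁ * IQ s x + Km * max (ulc s x - ubc s x) 0
    else if x ∈ Set.Ioo (glc s) (hlc s) then
      d₁ * (Jb * G s + Jb * (M * L)) + Km * ulc s x
    else 0 with hrhodef
  set Rbar : ℝ := d₁ * (Jb * (M * L) + Jb * (M * L)) + Km * M with hRbardef
  have hmaxM : ∀ s x, max (ulc s x - ubc s x) 0 ≤ M := by
    intro s x
    apply max_le _ hMpos.le
    have := hub0' s x
    have := hulM s x
    linarith
  have hrho_nonneg : ∀ s x, 0 ≤ rho s x := by
    intro s x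
    simp only [hrhodef]
    split_ifs with h1 h2
    · exact add_nonneg (mul_nonneg hd₁.le (hIQ_nonneg s x))
        (mul_nonneg hKm0 (le_max_right _ _))
    · apply add_nonneg _ (mul_nonneg hKm0 (hul0' s x))
      apply mul_nonneg hd₁.le
      apply add_nonneg (mul_nonneg hJb0.le (hG_nonneg s))
      positivity
    · exact le_rfl
  have hrho_le : ∀ s x, rho s x ≤ Rbar := by
    intro s x
    have hGb : Jb * G s ≤ Jb * (M * L) := mul_le_mul_of_nonneg_left (hG_le s) hJb0.le
    simp only [hrhodef, hRbardef]
    split_ifs with h1 h2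
    · have h3 : d₁ * IQ s x ≤ d₁ * (Jb * (M * L)) :=
        mul_le_mul_of_nonneg_left ((hIQ_le s x).trans hGb) hd₁.le
      have h4 : Km * max (ulc s x - ubc s x) 0 ≤ Km * M :=
        mul_le_mul_of_nonneg_left (hmaxM s x) hKm0
      have h5 : 0 ≤ d₁ * (Jb * (M * L)) := by positivity
      linarith
    · have h3 : d₁ * (Jb * G s + Jb * (M * L)) ≤ d₁ * (Jb * (M * L) + Jb * (M * L)) := by
        apply mul_le_mul_of_nonneg_left _ hd₁.le
        linarith
      have h4 : Km * ulc s x ≤ Km * M := mul_le_mul_of_nonneg_left (hulM s x) hKm0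
      linarith
    · positivity
  have hrho_meas_x : ∀ x, Measurable fun s => rho s x := by
    intro x
    simp only [hrhodef]
    apply Measurable.ite
    · exact ((isOpen_lt hgbc_cont continuous_const).inter
        (isOpen_lt continuous_const hhbc_cont)).measurableSet
    · exact ((continuous_const.mul (hIQx_cont x)).add
        (continuous_const.mul (((hulcx x).sub (hubcx x)).max continuous_const))).measurable
    · apply Measurable.ite
      · exact ((isOpen_lt hglc_cont continuous_const).inter
          (isOpen_lt continuous_const hhlc_cont)).measurableSet
      · exact ((continuous_const.mul ((continuous_const.mul hG_cont).add
          continuous_const)).add (continuous_const.mul (hulcx x))).measurable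
      · exact measurable_const
  have hrho_ii : ∀ x a b : ℝ, IntervalIntegrable (fun s => rho s x) volume a b := by
    intro x a b
    rw [intervalIntegrable_iff]
    have hfin : volume (Set.uIoc a b) < ⊤ := by
      have : Set.uIoc a b = Set.Ioc (a ⊓ b) (a ⊔ b) := rfl
      rw [this]
      exact measure_Ioc_lt_top
    apply Integrable.mono' (g := fun _ => Rbar) (integrableOn_const (hfin).ne)
      ((hrho_meas_x x).aestronglyMeasurable.restrict)
    apply Filter.Eventually.of_forall
    intro s
    rw [Real.norm_eq_abs, abs_of_nonneg (hrho_nonneg s x)]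
    exact hrho_le s x
  -- gate facts for rho
  have hrho_in : ∀ s x, x ∈ Set.Ioo (gbc s) (hbc s) →
      rho s x = d₁ * IQ s x + Km * max (ulc s x - ubc s x) 0 := by
    intro s x h
    simp only [hrhodef, if_pos h]
  have hrho_mid : ∀ s x, x ∉ Set.Ioo (gbc s) (hbc s) → x ∈ Set.Ioo (glc s) (hlc s) →
      rho s x = d₁ * (Jb * G s + Jb * (M * L)) + Km * ulc s x := by
    intro s x h1 h2
    simp only [hrhodef, if_neg h1, if_pos h2]
  -- the master pointwise-in-space increment estimate
  have master : ∀ x : ℝ, ∀ t₂ ∈ Set.Icc 0 T,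
      q t₂ x ≤ q 0 x + ∫ s in (0:ℝ)..t₂, rho s x := by
    intro x t₂ ht₂
    have hulpos_mem : ∀ s, 0 < ulc s x → x ∈ Set.Ioo (glc s) (hlc s) := by
      intro s hpos
      by_contra h
      rw [hulout' s x h] at hpos
      exact lt_irrefl _ hpos
    have hrho_intOn : IntegrableOn (fun s => rho s x) (Set.Ioc 0 t₂) := by
      have h := hrho_ii x 0 t₂
      rwa [intervalIntegrable_iff, Set.uIoc_of_le ht₂.1] at h
    have hRint_nonneg : 0 ≤ ∫ s in (0:ℝ)..t₂, rho s x :=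
      intervalIntegral.integral_nonneg ht₂.1 (fun s _ => hrho_nonneg s x)
    have hseg : ∀ (cl cr : ℝ) (U : ℝ → ℝ), cl ≤ cr →
        (∀ s ∈ Set.Ioo cl cr, rho s x = U s) →
        (∫ s in cl..cr, U s) = ∫ s in Set.Ioo cl cr, rho s x := by
      intro cl cr U hlr hmatch
      rw [intervalIntegral.integral_of_le hlr, MeasureTheory.integral_Ioc_eq_integral_Ioo]
      exact (setIntegral_congr_fun measurableSet_Ioo (fun s hs => hmatch s hs)).symm
    have hsum2 : ∀ cl cr dl dr : ℝ, 0 ≤ cl → cl ≤ cr → cr ≤ dl → dl ≤ dr → dr ≤ t₂ →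
        (∫ s in Set.Ioo cl cr, rho s x) + (∫ s in Set.Ioo dl dr, rho s x)
          ≤ ∫ s in (0:ℝ)..t₂, rho s x := by
      intro cl cr dl dr h0 h1 h2 h3 h4
      rw [intervalIntegral.integral_of_le ht₂.1]
      have hdisj : Disjoint (Set.Ioo cl cr) (Set.Ioo dl dr) := by
        rw [Set.disjoint_left]
        intro s hs hs'
        have := hs.2
        have := hs'.1
        linarith
      have hsub : Set.Ioo cl cr ∪ Set.Ioo dl dr ⊆ Set.Ioc 0 t₂ := by
        intro s hs
        rcases hs with hs | hs
        · exact ⟨lt_of_le_of_lt h0 hs.1, le_trans hs.2.le (le_trans h2 (h3.trans h4))⟩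
        · exact ⟨lt_of_le_of_lt (h0.trans (h1.trans h2)) hs.1, hs.2.le.trans h4⟩
      rw [← MeasureTheory.setIntegral_union hdisj measurableSet_Ioo
        (hrho_intOn.mono_set (fun s hs => hsub (Set.mem_union_left _ hs)))
        (hrho_intOn.mono_set (fun s hs => hsub (Set.mem_union_right _ hs)))]
      apply setIntegral_mono_set hrho_intOn
        (Filter.Eventually.of_forall (fun s => hrho_nonneg s x))
        (HasSubset.Subset.eventuallyLE hsub)
    set F2 : ℝ → ℝ := fun s => ulc s x - ubc s x with hF2def
    set U2 : ℝ → ℝ := fun s => d₁ * IQ s x + Km * max (ulc s x - ubc s x) 0 with hU2def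
    set U1 : ℝ → ℝ := fun s => d₁ * (Jb * G s + Jb * (M * L)) + Km * ulc s x with hU1def
    have hU2cont : Continuous U2 := by
      apply Continuous.add
      · exact continuous_const.mul (hIQx_cont x)
      · exact continuous_const.mul (((hulcx x).sub (hubcx x)).max continuous_const)
    have hU1cont : Continuous U1 := by
      apply Continuous.add
      · exact continuous_const.mul ((continuous_const.mul hG_cont).add continuous_const)
      · exact continuous_const.mul (hulcx x)
    have hU2nonneg : ∀ s, 0 ≤ U2 s := fun s =>
      add_nonneg (mul_nonneg hd₁.le (hIQ_nonneg s x)) (mul_nonneg hKm0 (le_max_right _ _))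
    have hU1nonneg : ∀ s, 0 ≤ U1 s := by
      intro s
      apply add_nonneg _ (mul_nonneg hKm0 (hul0' s x))
      apply mul_nonneg hd₁.le
      apply add_nonneg (mul_nonneg hJb0.le (hG_nonneg s))
      positivity
    have hF2cont : Continuous F2 := (hulcx x).sub (hubcx x)
    have hF2le : ∀ s, F2 s ≤ ulc s x := by
      intro s
      simp only [hF2def]
      linarith [hub0' s x]
    -- derivative facts
    have hder_ul : ∀ s ∈ Set.Ioo (0:ℝ) T, 0 < ulc s x →
        ∃ D, HasDerivAt (fun u => ulc u x) D s ∧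
          D ≤ d₁ * (∫ y in gl s..hl s, J₁ (x - y) * ul s y) - d₁ * ul s x
            + ul s x * (m s x - ul s x) := by
      intro s hs hpos
      have hτs : τ s = s := hτ_id s ⟨hs.1.le, hs.2.le⟩
      have hmem := hulpos_mem s hpos
      have hmem' : x ∈ Set.Ioo (gl s) (hl s) := by
        simpa only [hglcdef, hhlcdef, hτs] using hmem
      obtain ⟨D, hd, hb⟩ := hul_eq s ⟨hs.1, hs.2.le⟩ x hmem'
      refine ⟨D, ?_, hb⟩
      apply hd.congr_of_eventuallyEq
      filter_upwards [isOpen_Ioo.mem_nhds hs] with u hu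
      simp only [hulcdef, hτ_id u ⟨hu.1.le, hu.2.le⟩]
    have hder_ub : ∀ s ∈ Set.Ioo (0:ℝ) T, x ∈ Set.Ioo (gbc s) (hbc s) →
        ∃ D, HasDerivAt (fun u => ubc u x) D s ∧
          d₁ * (∫ y in gb s..hb s, J₁ (x - y) * ub s y) - d₁ * ub s x
            + ub s x * (m s x - ub s x) ≤ D := by
      intro s hs hmem
      have hτs : τ s = s := hτ_id s ⟨hs.1.le, hs.2.le⟩
      have hmem' : x ∈ Set.Ioo (gb s) (hb s) := by
        simpa only [hgbcdef, hhbcdef, hτs] using hmem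
      obtain ⟨D, hd, hb⟩ := hub_eq s ⟨hs.1, hs.2.le⟩ x hmem'
      refine ⟨D, ?_, hb⟩
      apply hd.congr_of_eventuallyEq
      filter_upwards [isOpen_Ioo.mem_nhds hs] with u hu
      simp only [hubcdef, hτ_id u ⟨hu.1.le, hu.2.le⟩]
    -- the phase-2 derivative hypothesis on a subinterval (a,b) where the gate is open
    have hD2 : ∀ a b : ℝ, 0 ≤ a → b ≤ t₂ →
        (∀ s, a < s → s ≤ b → x ∈ Set.Ioo (gbc s) (hbc s)) →
        ∀ s ∈ Set.Ioo a b, 0 < F2 s → ∃ D, HasDerivAt F2 D s ∧ D ≤ U2 s := by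
      intro a b ha hb hgate s hs hpos
      have hsT : s ∈ Set.Ioo (0:ℝ) T :=
        ⟨lt_of_le_of_lt ha hs.1, lt_of_lt_of_le hs.2 (hb.trans ht₂.2)⟩
      have hτs : τ s = s := hτ_id s ⟨hsT.1.le, hsT.2.le⟩
      have hulpos : 0 < ulc s x := by
        have := hub0' s x
        simp only [hF2def] at hpos
        linarith
      obtain ⟨Dl, hdl, hbl⟩ := hder_ul s hsT hulpos
      obtain ⟨Db, hdb, hbb⟩ := hder_ub s hsT (hgate s hs.1 hs.2.le)
      refine ⟨Dl - Db, hdl.sub hdb, ?_⟩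
      have hpos' : 0 < ul s x - ub s x := by
        have e1 : ulc s x = ul s x := by simp only [hulcdef, hτs]
        have e2 : ubc s x = ub s x := by simp only [hubcdef, hτs]
        simp only [hF2def] at hpos
        rw [e1, e2] at hpos
        exact hpos
      have := hchainB s hsT x hpos'
      simp only [hU2def]
      linarith
    -- the phase-1 derivative hypothesis on (a,b) where the gate is closed
    have hD1 : ∀ a b : ℝ, 0 ≤ a → b ≤ t₂ →
        (∀ s, a < s → s < b → x ∉ Set.Ioo (gbc s) (hbc s)) →
        ∀ s ∈ Set.Ioo a b, 0 < ulc s x →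
          ∃ D, HasDerivAt (fun u => ulc u x) D s ∧ D ≤ U1 s := by
      intro a b ha hb _hgate s hs hpos
      have hsT : s ∈ Set.Ioo (0:ℝ) T :=
        ⟨lt_of_le_of_lt ha hs.1, lt_of_lt_of_le hs.2 (hb.trans ht₂.2)⟩
      obtain ⟨Dl, hdl, hbl⟩ := hder_ul s hsT hpos
      refine ⟨Dl, hdl, ?_⟩
      have h1 := hchainL s hsT x
      simp only [hU1def]
      linarith
    rcases eq_or_lt_of_le ht₂.1 with h0t | h0t
    · rw [← h0t]
      simp
    by_cases hx0 : x ∈ Set.Ioo (gbc 0) (hbc 0)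
    · -- the (gb,hb)-gate is open from time 0 on
      have hgate : ∀ s, 0 ≤ s → x ∈ Set.Ioo (gbc s) (hbc s) := fun s hs =>
        ⟨lt_of_le_of_lt (hgbc_anti hs) hx0.1, lt_of_lt_of_le hx0.2 (hhbc_mono hs)⟩
      obtain ⟨c2, hc2I, hc2pos, hP2⟩ := pp_aux (f := F2) (U := U2) ht₂.1
        hF2cont.continuousOn hU2cont.continuousOn (fun s _ => hU2nonneg s)
        (hD2 0 t₂ le_rfl le_rfl (fun s hs _ => hgate s hs.le))
      have hqt : q t₂ x = max (F2 t₂) 0 := hq_in t₂ x (hgate t₂ ht₂.1)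
      have hq0' : q 0 x = max (F2 0) 0 := hq_in 0 x hx0
      have hmatch2 : ∀ s ∈ Set.Ioo c2 t₂, rho s x = U2 s := fun s hs =>
        hrho_in s x (hgate s (hc2I.1.trans hs.1.le))
      have hseg2 := hseg c2 t₂ U2 hc2I.2 hmatch2
      have hsum := hsum2 0 0 c2 t₂ le_rfl le_rfl hc2I.1 hc2I.2 le_rfl
      simp only [Set.Ioo_self, MeasureTheory.setIntegral_empty, zero_add] at hsum
      have h2 : (∫ s in c2..t₂, U2 s) ≤ ∫ s in (0:ℝ)..t₂, rho s x := by
        rw [hseg2]; exact hsum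
      rw [hqt, hq0']
      have h1 : (0:ℝ) ≤ max (F2 0) 0 := le_max_right _ _
      apply max_le _ (by linarith)
      linarith
    · -- the gate is closed at time 0
      have hq0'' : q 0 x = ulc 0 x := hq_notin 0 x hx0
      have hstart : max (ulc 0 x) 0 = q 0 x := by
        rw [hq0'']; exact max_eq_left (hul0' 0 x)
      set E : Set ℝ := {s : ℝ | s ∈ Set.Icc 0 t₂ ∧ x ∈ Set.Ioo (gbc s) (hbc s)} with hEdef
      have hbddE : BddBelow E := ⟨0, fun e he => he.1.1⟩
      by_cases hEne : E.Nonempty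
      · set c : ℝ := sInf E with hcdef
        have hc0 : 0 ≤ c := le_csInf hEne (fun e he => he.1.1)
        obtain ⟨e₀, he₀⟩ := hEne
        have hct : c ≤ t₂ := le_trans (csInf_le hbddE he₀) he₀.1.2
        have hafter : ∀ s, c < s → s ≤ t₂ → x ∈ Set.Ioo (gbc s) (hbc s) := by
          intro s hcs _
          obtain ⟨e, heE, hes⟩ := exists_lt_of_csInf_lt ⟨e₀, he₀⟩ hcs
          exact ⟨lt_of_le_of_lt (hgbc_anti hes.le) heE.2.1,
            lt_of_lt_of_le heE.2.2 (hhbc_mono hes.le)⟩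
        have hbefore : ∀ s, 0 ≤ s → s < c → x ∉ Set.Ioo (gbc s) (hbc s) := by
          intro s h0s hsc hmem
          exact absurd (csInf_le hbddE ⟨⟨h0s, hsc.le.trans hct⟩, hmem⟩) (not_le.2 hsc)
        obtain ⟨c1, hc1I, hc1pos, hP1⟩ := pp_aux (f := fun s => ulc s x) (U := U1) hc0
          (hulcx x).continuousOn hU1cont.continuousOn (fun s _ => hU1nonneg s)
          (hD1 0 c le_rfl hct (fun s h1 h2 => hbefore s h1.le h2))
        have hmatch1 : ∀ s ∈ Set.Ioo c1 c, rho s x = U1 s := by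
          intro s hs
          exact hrho_mid s x (hbefore s (hc1I.1.trans hs.1.le) hs.2)
            (hulpos_mem s (hc1pos s hs))
        have hseg1 := hseg c1 c U1 hc1I.2 hmatch1
        rcases eq_or_lt_of_le hct with hceq | hclt
        · -- c = t₂ : only phase 1
          have h2 : q t₂ x ≤ ulc t₂ x := hq_le_ul t₂ x
          have h3 : ulc t₂ x ≤ max (ulc 0 x) 0 + ∫ s in c1..c, U1 s := by
            rw [← hceq]; exact hP1
          have hsum := hsum2 c1 c c c hc1I.1 hc1I.2 le_rfl le_rfl hct
          simp only [Set.Ioo_self, MeasureTheory.setIntegral_empty, add_zero] at hsum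
          rw [hseg1, hstart] at h3
          linarith
        · -- c < t₂ : phase 2 follows
          obtain ⟨c2, hc2I, hc2pos, hP2⟩ := pp_aux (f := F2) (U := U2) hct
            hF2cont.continuousOn hU2cont.continuousOn (fun s _ => hU2nonneg s)
            (hD2 c t₂ hc0 le_rfl (fun s hcs hst₂ => hafter s hcs hst₂))
          have hqt : q t₂ x = max (F2 t₂) 0 := hq_in t₂ x (hafter t₂ hclt le_rfl)
          have hmatch2 : ∀ s ∈ Set.Ioo c2 t₂, rho s x = U2 s := fun s hs =>
            hrho_in s x (hafter s (lt_of_le_of_lt hc2I.1 hs.1) hs.2.le)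
          have hseg2 := hseg c2 t₂ U2 hc2I.2 hmatch2
          have hsum := hsum2 c1 c c2 t₂ hc1I.1 hc1I.2 hc2I.1 hc2I.2 le_rfl
          have h5 : (∫ s in c1..c, U1 s) + (∫ s in c2..t₂, U2 s)
              ≤ ∫ s in (0:ℝ)..t₂, rho s x := by
            rw [hseg1, hseg2]; exact hsum
          have hF2c : max (F2 c) 0 ≤ ulc c x := max_le (hF2le c) (hul0' c x)
          have h6 := hP1
          rw [hstart] at h6
          rw [hqt]
          apply max_le _ (add_nonneg (hq_nonneg 0 x) hRint_nonneg)
          linarith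
      · -- the gate never opens on [0,t₂] : only phase 1
        obtain ⟨c1, hc1I, hc1pos, hP1⟩ := pp_aux (f := fun s => ulc s x) (U := U1) ht₂.1
          (hulcx x).continuousOn hU1cont.continuousOn (fun s _ => hU1nonneg s)
          (hD1 0 t₂ le_rfl le_rfl
            (fun s h1 h2 hmem => hEne ⟨s, ⟨⟨h1.le, h2.le⟩, hmem⟩⟩))
        have hmatch1 : ∀ s ∈ Set.Ioo c1 t₂, rho s x = U1 s := by
          intro s hs
          have hnot : x ∉ Set.Ioo (gbc s) (hbc s) := fun hmem =>
            hEne ⟨s, ⟨⟨hc1I.1.trans hs.1.le, hs.2.le⟩, hmem⟩⟩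
          exact hrho_mid s x hnot (hulpos_mem s (hc1pos s hs))
        have hseg1 := hseg c1 t₂ U1 hc1I.2 hmatch1
        have hsum := hsum2 c1 t₂ t₂ t₂ hc1I.1 hc1I.2 le_rfl le_rfl le_rfl
        simp only [Set.Ioo_self, MeasureTheory.setIntegral_empty, add_zero] at hsum
        have h2 : q t₂ x ≤ ulc t₂ x := hq_le_ul t₂ x
        rw [hseg1, hstart] at hP1
        linarith
  -- Φ and Ψ : positive parts of boundary defects
  set Φ : ℝ → ℝ := fun s => max (hlc s - hbc s) 0 with hΦdef
  set Ψ : ℝ → ℝ := fun s => max (gbc s - glc s) 0 with hΨdef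
  have hΦcont : Continuous Φ := (hhlc_cont.sub hhbc_cont).max continuous_const
  have hΨcont : Continuous Ψ := (hgbc_cont.sub hglc_cont).max continuous_const
  have hΦ0 : ∀ s, 0 ≤ Φ s := fun s => le_max_right _ _
  have hΨ0 : ∀ s, 0 ≤ Ψ s := fun s => le_max_right _ _
  set C₁ : ℝ := d₁ + 2 * Km with hC₁def
  set C₂ : ℝ := d₁ * (Jb * (M * L) + Jb * (M * L)) with hC₂def
  have hC₁0 : 0 ≤ C₁ := by simp only [hC₁def]; linarith
  have hC₂0 : 0 ≤ C₂ := by simp only [hC₂def]; positivity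
  -- inner Tonelli : the IQ integral over the upper region
  have hIQ_set : ∀ s, (∫ x in Set.Ioo (gbc s) (hbc s), IQ s x) ≤ G s := by
    intro s
    have hbound : Integrable
        (fun p : ℝ × ℝ => Set.indicator (Set.Icc a₀ b₀) (fun _ => Jb * M) p.2)
        ((volume.restrict (Set.Ioo (gbc s) (hbc s))).prod volume) := by
      have heq : (fun p : ℝ × ℝ => Set.indicator (Set.Icc a₀ b₀) (fun _ => Jb * M) p.2)
          = Set.indicator (Set.univ ×ˢ Set.Icc a₀ b₀) (fun _ => Jb * M) := by
        ext p
        by_cases h : p.2 ∈ Set.Icc a₀ b₀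
        · rw [Set.indicator_of_mem h, Set.indicator_of_mem
            (show p ∈ Set.univ ×ˢ Set.Icc a₀ b₀ from ⟨trivial, h⟩)]
        · rw [Set.indicator_of_notMem h, Set.indicator_of_notMem (fun hc => h hc.2)]
      rw [heq]
      apply IntegrableOn.integrable_indicator _ (MeasurableSet.univ.prod measurableSet_Icc)
      apply integrableOn_const (ne_of_lt ?_)
      rw [Measure.prod_prod, Measure.restrict_apply_univ]
      exact ENNReal.mul_lt_top measure_Ioo_lt_top measure_Icc_lt_top
    have huncur : Integrable (fun p : ℝ × ℝ => J₁ (p.1 - p.2) * q s p.2)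
        ((volume.restrict (Set.Ioo (gbc s) (hbc s))).prod volume) := by
      apply Integrable.mono' hbound
      · exact (((Jc.comp (continuous_fst.sub continuous_snd)).measurable).mul
          ((hq_meas s).comp measurable_snd)).aestronglyMeasurable
      · apply Filter.Eventually.of_forall
        intro p
        rw [Real.norm_eq_abs, abs_of_nonneg (mul_nonneg (Jnn _) (hq_nonneg s _))]
        exact hJq_bd s p.1 p.2
    have hswap := MeasureTheory.integral_integral_swap
      (f := fun x y => J₁ (x - y) * q s y)
      (μ := volume.restrict (Set.Ioo (gbc s) (hbc s))) (ν := volume) huncur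
    have hIQeq : (∫ x in Set.Ioo (gbc s) (hbc s), IQ s x)
        = ∫ y, (∫ x in Set.Ioo (gbc s) (hbc s), J₁ (x - y)) * q s y := by
      rw [show (fun x => IQ s x) = fun x => ∫ y, J₁ (x - y) * q s y from rfl]
      rw [hswap]
      congr 1
      funext y
      rw [← MeasureTheory.integral_mul_const]
    rw [hIQeq]
    have hAymeas : Measurable fun y => ∫ x in Set.Ioo (gbc s) (hbc s), J₁ (x - y) :=
      meas_param_gen (F := fun y x => J₁ (x - y))
        ((Jc.comp (continuous_snd.sub continuous_fst)).measurable) measurableSet_Ioo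
    have hlhs_int : Integrable fun y =>
        (∫ x in Set.Ioo (gbc s) (hbc s), J₁ (x - y)) * q s y := by
      apply Integrable.mono' (hq_int s) (hAymeas.mul (hq_meas s)).aestronglyMeasurable
      apply Filter.Eventually.of_forall
      intro y
      have h1 : (∫ x in Set.Ioo (gbc s) (hbc s), J₁ (x - y)) ≤ 1 := hAle1' _ y
      have h2 : 0 ≤ ∫ x in Set.Ioo (gbc s) (hbc s), J₁ (x - y) :=
        setIntegral_nonneg measurableSet_Ioo (fun x _ => Jnn _)
      rw [Real.norm_eq_abs, Pi.mul_apply, abs_of_nonneg (mul_nonneg h2 (hq_nonneg s y))]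
      have h3 := mul_le_mul_of_nonneg_right h1 (hq_nonneg s y)
      linarith
    apply integral_mono hlhs_int (hq_int s)
    intro y
    dsimp only
    have h1 : (∫ x in Set.Ioo (gbc s) (hbc s), J₁ (x - y)) ≤ 1 := hAle1' _ y
    have h2 : 0 ≤ ∫ x in Set.Ioo (gbc s) (hbc s), J₁ (x - y) :=
      setIntegral_nonneg measurableSet_Ioo (fun x _ => Jnn _)
    have h3 := mul_le_mul_of_nonneg_right h1 (hq_nonneg s y)
    linarith
  -- slicewise bound for rho
  have hrho_slice : ∀ s, (∫ x, rho s x) ≤ C₁ * G s + C₂ * (Φ s + Ψ s) := by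
    intro s
    have hD_meas : MeasurableSet (Set.Ioo (glc s) (hlc s) \ Set.Ioo (gbc s) (hbc s)) :=
      measurableSet_Ioo.diff measurableSet_Ioo
    have hvolD_lt : volume (Set.Ioo (glc s) (hlc s) \ Set.Ioo (gbc s) (hbc s)) < ⊤ :=
      lt_of_le_of_lt (measure_mono Set.diff_subset) measure_Ioo_lt_top
    have hIQ_intOn : IntegrableOn (fun x => IQ s x) (Set.Ioo (gbc s) (hbc s)) := by
      apply Integrable.mono' (g := fun _ => Jb * (M * L))
        (integrableOn_const (measure_Ioo_lt_top).ne)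
        (hIQ_meas_x s).aestronglyMeasurable.restrict
      apply Filter.Eventually.of_forall
      intro x
      rw [Real.norm_eq_abs, abs_of_nonneg (hIQ_nonneg s x)]
      exact (hIQ_le s x).trans (mul_le_mul_of_nonneg_left (hG_le s) hJb0.le)
    have hmax_intOn : IntegrableOn (fun x => max (ulc s x - ubc s x) 0)
        (Set.Ioo (gbc s) (hbc s)) :=
      ((((hulcs s).sub (hubcs s)).max continuous_const).integrableOn_Icc).mono_set
        Set.Ioo_subset_Icc_self
    have hul_intOn : IntegrableOn (fun x => ulc s x)
        (Set.Ioo (glc s) (hlc s) \ Set.Ioo (gbc s) (hbc s)) :=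
      (((hulcs s)).integrableOn_Icc).mono_set
        (fun x hx => (hsubL s (Set.Ioo_subset_Ioc_self hx.1)))
    have hconst_intOn : IntegrableOn (fun _ : ℝ => d₁ * (Jb * G s + Jb * (M * L)))
        (Set.Ioo (glc s) (hlc s) \ Set.Ioo (gbc s) (hbc s)) :=
      integrableOn_const (hvolD_lt).ne
    have hf2_intOn : IntegrableOn
        (fun x => d₁ * IQ s x + Km * max (ulc s x - ubc s x) 0)
        (Set.Ioo (gbc s) (hbc s)) :=
      (hIQ_intOn.const_mul d₁).add (hmax_intOn.const_mul Km)
    have hf1_intOn : IntegrableOn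
        (fun x => d₁ * (Jb * G s + Jb * (M * L)) + Km * ulc s x)
        (Set.Ioo (glc s) (hlc s) \ Set.Ioo (gbc s) (hbc s)) :=
      hconst_intOn.add (hul_intOn.const_mul Km)
    have hsplit : (∫ x, rho s x)
        = (∫ x in Set.Ioo (gbc s) (hbc s),
            (d₁ * IQ s x + Km * max (ulc s x - ubc s x) 0))
          + ∫ x in Set.Ioo (glc s) (hlc s) \ Set.Ioo (gbc s) (hbc s),
            (d₁ * (Jb * G s + Jb * (M * L)) + Km * ulc s x) := by
      rw [← MeasureTheory.integral_indicator measurableSet_Ioo,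
        ← MeasureTheory.integral_indicator hD_meas,
        ← MeasureTheory.integral_add (hf2_intOn.integrable_indicator measurableSet_Ioo)
          (hf1_intOn.integrable_indicator hD_meas)]
      apply MeasureTheory.integral_congr_ae
      apply Filter.Eventually.of_forall
      intro x
      simp only [Pi.add_apply]
      by_cases h2 : x ∈ Set.Ioo (gbc s) (hbc s)
      · rw [hrho_in s x h2]
        rw [Set.indicator_of_mem h2, Set.indicator_of_notMem (fun hD' => hD'.2 h2)]
        ring
      · by_cases h1 : x ∈ Set.Ioo (glc s) (hlc s)
        · rw [hrho_mid s x h2 h1]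
          rw [Set.indicator_of_notMem h2, Set.indicator_of_mem
            (show x ∈ _ \ _ from ⟨h1, h2⟩)]
          ring
        · have h0 : rho s x = 0 := by simp only [hrhodef, if_neg h2, if_neg h1]
          rw [h0, Set.indicator_of_notMem h2,
            Set.indicator_of_notMem (fun hD' => h1 hD'.1)]
          ring
    have hS2a : (∫ x in Set.Ioo (gbc s) (hbc s),
        (d₁ * IQ s x + Km * max (ulc s x - ubc s x) 0))
        = d₁ * (∫ x in Set.Ioo (gbc s) (hbc s), IQ s x)
          + Km * ∫ x in Set.Ioo (gbc s) (hbc s), max (ulc s x - ubc s x) 0 := by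
      rw [MeasureTheory.integral_add (hIQ_intOn.const_mul d₁) (hmax_intOn.const_mul Km),
        MeasureTheory.integral_const_mul, MeasureTheory.integral_const_mul]
    have hmaxq : (∫ x in Set.Ioo (gbc s) (hbc s), max (ulc s x - ubc s x) 0)
        = ∫ x in Set.Ioo (gbc s) (hbc s), q s x :=
      setIntegral_congr_fun measurableSet_Ioo (fun x hx => (hq_in s x hx).symm)
    have hqS2 : (∫ x in Set.Ioo (gbc s) (hbc s), q s x) ≤ G s :=
      setIntegral_le_integral (hq_int s) (Filter.Eventually.of_forall (hq_nonneg s))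
    have hDa : (∫ x in Set.Ioo (glc s) (hlc s) \ Set.Ioo (gbc s) (hbc s),
        (d₁ * (Jb * G s + Jb * (M * L)) + Km * ulc s x))
        = (volume (Set.Ioo (glc s) (hlc s) \ Set.Ioo (gbc s) (hbc s))).toReal
            * (d₁ * (Jb * G s + Jb * (M * L)))
          + Km * ∫ x in Set.Ioo (glc s) (hlc s) \ Set.Ioo (gbc s) (hbc s), ulc s x := by
      rw [MeasureTheory.integral_add hconst_intOn (hul_intOn.const_mul Km),
        MeasureTheory.setIntegral_const, MeasureTheory.measureReal_def, smul_eq_mul,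
        MeasureTheory.integral_const_mul]
    have hsubD : Set.Ioo (glc s) (hlc s) \ Set.Ioo (gbc s) (hbc s)
        ⊆ Set.Ioc (glc s) (gbc s) ∪ Set.Ico (hbc s) (hlc s) := by
      rintro x ⟨hx1, hx2⟩
      by_cases h : gbc s < x
      · right
        have h3 : ¬ x < hbc s := fun hh => hx2 ⟨h, hh⟩
        exact ⟨not_lt.1 h3, hx1.2⟩
      · left
        exact ⟨hx1.1, not_lt.1 h⟩
    have hvolD : (volume (Set.Ioo (glc s) (hlc s) \ Set.Ioo (gbc s) (hbc s))).toReal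
        ≤ Ψ s + Φ s := by
      have h1 : volume (Set.Ioo (glc s) (hlc s) \ Set.Ioo (gbc s) (hbc s))
          ≤ ENNReal.ofReal (gbc s - glc s) + ENNReal.ofReal (hlc s - hbc s) := by
        refine le_trans (measure_mono hsubD) (le_trans (measure_union_le _ _) ?_)
        rw [Real.volume_Ioc, Real.volume_Ico]
      have h2 : (ENNReal.ofReal (gbc s - glc s) + ENNReal.ofReal (hlc s - hbc s)) ≠ ⊤ :=
        ENNReal.add_ne_top.2 ⟨ENNReal.ofReal_ne_top, ENNReal.ofReal_ne_top⟩
      calc (volume (Set.Ioo (glc s) (hlc s) \ Set.Ioo (gbc s) (hbc s))).toReal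
          ≤ (ENNReal.ofReal (gbc s - glc s) + ENNReal.ofReal (hlc s - hbc s)).toReal :=
            ENNReal.toReal_mono h2 h1
        _ = max (gbc s - glc s) 0 + max (hlc s - hbc s) 0 := by
            rw [ENNReal.toReal_add ENNReal.ofReal_ne_top ENNReal.ofReal_ne_top,
              ENNReal.toReal_ofReal', ENNReal.toReal_ofReal']
        _ = Ψ s + Φ s := rfl
    have hulD : (∫ x in Set.Ioo (glc s) (hlc s) \ Set.Ioo (gbc s) (hbc s), ulc s x)
        = ∫ x in Set.Ioo (glc s) (hlc s) \ Set.Ioo (gbc s) (hbc s), q s x :=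
      setIntegral_congr_fun hD_meas (fun x hx => (hq_notin s x hx.2).symm)
    have hqD : (∫ x in Set.Ioo (glc s) (hlc s) \ Set.Ioo (gbc s) (hbc s), q s x) ≤ G s :=
      setIntegral_le_integral (hq_int s) (Filter.Eventually.of_forall (hq_nonneg s))
    have hconst_le : d₁ * (Jb * G s + Jb * (M * L)) ≤ C₂ := by
      simp only [hC₂def]
      apply mul_le_mul_of_nonneg_left _ hd₁.le
      have := mul_le_mul_of_nonneg_left (hG_le s) hJb0.le
      linarith
    have hconst_nonneg : 0 ≤ d₁ * (Jb * G s + Jb * (M * L)) := by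
      apply mul_nonneg hd₁.le
      apply add_nonneg (mul_nonneg hJb0.le (hG_nonneg s))
      positivity
    have hvol_nonneg : 0 ≤ (volume (Set.Ioo (glc s) (hlc s)
        \ Set.Ioo (gbc s) (hbc s))).toReal := ENNReal.toReal_nonneg
    have hvc : (volume (Set.Ioo (glc s) (hlc s) \ Set.Ioo (gbc s) (hbc s))).toReal
        * (d₁ * (Jb * G s + Jb * (M * L))) ≤ (Ψ s + Φ s) * C₂ :=
      mul_le_mul hvolD hconst_le hconst_nonneg (by linarith [hΨ0 s, hΦ0 s])
    have hd₁G : d₁ * (∫ x in Set.Ioo (gbc s) (hbc s), IQ s x) ≤ d₁ * G s :=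
      mul_le_mul_of_nonneg_left (hIQ_set s) hd₁.le
    have hKm1 : Km * (∫ x in Set.Ioo (gbc s) (hbc s), max (ulc s x - ubc s x) 0)
        ≤ Km * G s := by
      rw [hmaxq]
      exact mul_le_mul_of_nonneg_left hqS2 hKm0
    have hKm2 : Km * (∫ x in Set.Ioo (glc s) (hlc s)
        \ Set.Ioo (gbc s) (hbc s), ulc s x) ≤ Km * G s := by
      rw [hulD]
      exact mul_le_mul_of_nonneg_left hqD hKm0
    rw [hsplit, hS2a, hDa]
    simp only [hC₁def]
    nlinarith [hΦ0 s, hΨ0 s]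
  have hRbar0 : 0 ≤ Rbar := le_trans (hrho_nonneg 0 a₀) (hrho_le 0 a₀)
  have hG0 : G 0 = 0 := by
    have h0 : (fun x => q 0 x) = fun _ => (0:ℝ) := funext hq0
    simp only [hGdef, h0, MeasureTheory.integral_zero]
  -- product measurability of rho
  have hIQ_prod_meas : Measurable fun p : ℝ × ℝ => IQ p.1 p.2 := by
    have hsm : StronglyMeasurable fun z : (ℝ × ℝ) × ℝ => J₁ (z.1.2 - z.2) * q z.1.1 z.2 := by
      apply Measurable.stronglyMeasurable
      apply Measurable.mul
      · exact Jc.measurable.comp ((measurable_snd.comp measurable_fst).sub measurable_snd)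
      · exact hq_prod_meas.comp ((measurable_fst.comp measurable_fst).prodMk measurable_snd)
    exact hsm.integral_prod_right'.measurable
  have hOpenL : IsOpen {p : ℝ × ℝ | p.2 ∈ Set.Ioo (glc p.1) (hlc p.1)} := by
    have h1 : IsOpen {p : ℝ × ℝ | glc p.1 < p.2} :=
      isOpen_lt (hglc_cont.comp continuous_fst) continuous_snd
    have h2 : IsOpen {p : ℝ × ℝ | p.2 < hlc p.1} :=
      isOpen_lt continuous_snd (hhlc_cont.comp continuous_fst)
    exact h1.inter h2
  have hrho_prod_meas : Measurable fun p : ℝ × ℝ => rho p.1 p.2 := by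
    simp only [hrhodef]
    apply Measurable.ite hOpenB.measurableSet
    · apply Measurable.add
      · exact hIQ_prod_meas.const_mul d₁
      · exact (((hulc_cont.sub hubc_cont).max continuous_const).measurable).const_mul Km
    · apply Measurable.ite hOpenL.measurableSet
      · exact (((continuous_const.mul ((continuous_const.mul
          (hG_cont.comp continuous_fst)).add continuous_const)).add
          (continuous_const.mul hulc_cont)).measurable)
      · exact measurable_const
  have hrho_prod_int : ∀ t, 0 ≤ t →
      Integrable (fun p : ℝ × ℝ => rho p.1 p.2)
        ((volume.restrict (Set.Ioc 0 t)).prod volume) := by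
    intro t ht
    have hbound : Integrable
        (fun p : ℝ × ℝ => Set.indicator (Set.Icc a₀ b₀) (fun _ => Rbar) p.2)
        ((volume.restrict (Set.Ioc 0 t)).prod volume) := by
      have heq : (fun p : ℝ × ℝ => Set.indicator (Set.Icc a₀ b₀) (fun _ => Rbar) p.2)
          = Set.indicator (Set.univ ×ˢ Set.Icc a₀ b₀) (fun _ => Rbar) := by
        ext p
        by_cases h : p.2 ∈ Set.Icc a₀ b₀
        · rw [Set.indicator_of_mem h, Set.indicator_of_mem
            (show p ∈ Set.univ ×ˢ Set.Icc a₀ b₀ from ⟨trivial, h⟩)]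
        · rw [Set.indicator_of_notMem h, Set.indicator_of_notMem (fun hc => h hc.2)]
      rw [heq]
      apply IntegrableOn.integrable_indicator _ (MeasurableSet.univ.prod measurableSet_Icc)
      apply integrableOn_const (ne_of_lt ?_)
      rw [Measure.prod_prod, Measure.restrict_apply_univ]
      exact ENNReal.mul_lt_top measure_Ioc_lt_top measure_Icc_lt_top
    apply Integrable.mono' hbound hrho_prod_meas.aestronglyMeasurable
    apply Filter.Eventually.of_forall
    intro p
    rw [Real.norm_eq_abs, abs_of_nonneg (hrho_nonneg p.1 p.2)]
    by_cases h2 : p.2 ∈ Set.Ioo (gbc p.1) (hbc p.1)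
    · rw [Set.indicator_of_mem (hsubB p.1 (Set.Ioo_subset_Ioc_self h2))]
      exact hrho_le p.1 p.2
    · by_cases h1 : p.2 ∈ Set.Ioo (glc p.1) (hlc p.1)
      · rw [Set.indicator_of_mem (hsubL p.1 (Set.Ioo_subset_Ioc_self h1))]
        exact hrho_le p.1 p.2
      · have h0 : rho p.1 p.2 = 0 := by simp only [hrhodef, if_neg h2, if_neg h1]
        rw [h0]
        exact Set.indicator_nonneg (fun y _ => hRbar0) _
  -- the Grönwall inequality for G
  have hGineq : ∀ t ∈ Set.Icc 0 T,
      G t ≤ ∫ s in (0:ℝ)..t, (C₁ * G s + C₂ * (Φ s + Ψ s)) := by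
    intro t ht
    have hpi := hrho_prod_int t ht.1
    have hxint : Integrable fun x => ∫ s in Set.Ioc 0 t, rho s x := by
      have h := hpi.integral_prod_right
      exact h
    have hsint : Integrable (fun s => ∫ x, rho s x) (volume.restrict (Set.Ioc 0 t)) :=
      hpi.integral_prod_left
    have hswap := MeasureTheory.integral_integral_swap (f := fun s x => rho s x) hpi
    have h1 : G t ≤ (∫ x, q 0 x) + ∫ x, ∫ s in Set.Ioc 0 t, rho s x := by
      have hmono : (∫ x, q t x) ≤ ∫ x, (q 0 x + ∫ s in Set.Ioc 0 t, rho s x) := by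
        apply integral_mono (hq_int t) ((hq_int 0).add hxint)
        intro x
        have h2 := master x t ht
        rw [intervalIntegral.integral_of_le ht.1] at h2
        exact h2
      calc G t = ∫ x, q t x := rfl
        _ ≤ ∫ x, (q 0 x + ∫ s in Set.Ioc 0 t, rho s x) := hmono
        _ = _ := MeasureTheory.integral_add (hq_int 0) hxint
    have h4 : (∫ x, ∫ s in Set.Ioc 0 t, rho s x)
        = ∫ s in Set.Ioc 0 t, ∫ x, rho s x := hswap.symm
    have h5 : (∫ s in Set.Ioc 0 t, ∫ x, rho s x)
        ≤ ∫ s in Set.Ioc 0 t, (C₁ * G s + C₂ * (Φ s + Ψ s)) := by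
      apply MeasureTheory.setIntegral_mono_on hsint _ measurableSet_Ioc
        (fun s _ => hrho_slice s)
      exact ((continuous_const.mul hG_cont).add
        (continuous_const.mul (hΦcont.add hΨcont))).integrableOn_Ioc
    have h6 : (∫ x, q 0 x) = 0 := hG0
    rw [intervalIntegral.integral_of_le ht.1]
    linarith
  -- the Grönwall inequalities for Φ and Ψ
  have hμG_cont : Continuous fun s => μ * G s := continuous_const.mul hG_cont
  have hμG_nonneg : ∀ s, 0 ≤ μ * G s := fun s => mul_nonneg hμ.le (hG_nonneg s)
  have hΦineq : ∀ t ∈ Set.Icc 0 T, Φ t ≤ ∫ s in (0:ℝ)..t, μ * G s := by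
    intro t ht
    have hder : ∀ s ∈ Set.Ioo (0:ℝ) t, 0 < hlc s - hbc s →
        ∃ D, HasDerivAt (fun s => hlc s - hbc s) D s ∧ D ≤ μ * G s := by
      intro s hs hpos
      have hsT : s ∈ Set.Ioo (0:ℝ) T := ⟨hs.1, lt_of_lt_of_le hs.2 ht.2⟩
      refine ⟨hl' s - hb' s, ?_, ?_⟩
      · have hdl : HasDerivAt hlc (hl' s) s := by
          apply (hhlD s ⟨hsT.1.le, hsT.2.le⟩).congr_of_eventuallyEq
          filter_upwards [isOpen_Ioo.mem_nhds hsT] with u hu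
          simp only [hhlcdef, hτ_id u ⟨hu.1.le, hu.2.le⟩]
        have hdb : HasDerivAt hbc (hb' s) s := by
          apply (hhbD s ⟨hsT.1.le, hsT.2.le⟩).congr_of_eventuallyEq
          filter_upwards [isOpen_Ioo.mem_nhds hsT] with u hu
          simp only [hhbcdef, hτ_id u ⟨hu.1.le, hu.2.le⟩]
        exact hdl.sub hdb
      · exact hchainH s hsT (by linarith)
    obtain ⟨c, hcI, hcpos, hP⟩ := pp_aux (f := fun s => hlc s - hbc s)
      (U := fun s => μ * G s) ht.1 ((hhlc_cont.sub hhbc_cont).continuousOn)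
      hμG_cont.continuousOn (fun s _ => hμG_nonneg s) hder
    have hP0 : max (hlc 0 - hbc 0) 0 = 0 := by
      apply max_eq_right
      simp only [hhlcdef, hhbcdef, hτ0]
      linarith [hinit_h]
    have hii1 : IntervalIntegrable (fun s => μ * G s) volume 0 c :=
      hμG_cont.intervalIntegrable _ _
    have hii2 : IntervalIntegrable (fun s => μ * G s) volume c t :=
      hμG_cont.intervalIntegrable _ _
    have hsplitI : (∫ s in (0:ℝ)..c, μ * G s) + ∫ s in c..t, μ * G s
        = ∫ s in (0:ℝ)..t, μ * G s :=
      intervalIntegral.integral_add_adjacent_intervals hii1 hii2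
    have hpos0 : 0 ≤ ∫ s in (0:ℝ)..c, μ * G s :=
      intervalIntegral.integral_nonneg hcI.1 (fun s _ => hμG_nonneg s)
    have htot0 : 0 ≤ ∫ s in (0:ℝ)..t, μ * G s :=
      intervalIntegral.integral_nonneg ht.1 (fun s _ => hμG_nonneg s)
    rw [hP0] at hP
    simp only [hΦdef]
    apply max_le _ htot0
    linarith
  have hΨineq : ∀ t ∈ Set.Icc 0 T, Ψ t ≤ ∫ s in (0:ℝ)..t, μ * G s := by
    intro t ht
    have hder : ∀ s ∈ Set.Ioo (0:ℝ) t, 0 < gbc s - glc s →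
        ∃ D, HasDerivAt (fun s => gbc s - glc s) D s ∧ D ≤ μ * G s := by
      intro s hs hpos
      have hsT : s ∈ Set.Ioo (0:ℝ) T := ⟨hs.1, lt_of_lt_of_le hs.2 ht.2⟩
      refine ⟨gb' s - gl' s, ?_, ?_⟩
      · have hdb : HasDerivAt gbc (gb' s) s := by
          apply (hgbD s ⟨hsT.1.le, hsT.2.le⟩).congr_of_eventuallyEq
          filter_upwards [isOpen_Ioo.mem_nhds hsT] with u hu
          simp only [hgbcdef, hτ_id u ⟨hu.1.le, hu.2.le⟩]
        have hdl : HasDerivAt glc (gl' s) s := by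
          apply (hglD s ⟨hsT.1.le, hsT.2.le⟩).congr_of_eventuallyEq
          filter_upwards [isOpen_Ioo.mem_nhds hsT] with u hu
          simp only [hglcdef, hτ_id u ⟨hu.1.le, hu.2.le⟩]
        exact hdb.sub hdl
      · exact hchainG s hsT (by linarith)
    obtain ⟨c, hcI, hcpos, hP⟩ := pp_aux (f := fun s => gbc s - glc s)
      (U := fun s => μ * G s) ht.1 ((hgbc_cont.sub hglc_cont).continuousOn)
      hμG_cont.continuousOn (fun s _ => hμG_nonneg s) hder
    have hP0 : max (gbc 0 - glc 0) 0 = 0 := by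
      apply max_eq_right
      simp only [hgbcdef, hglcdef, hτ0]
      linarith [hinit_g]
    have hii1 : IntervalIntegrable (fun s => μ * G s) volume 0 c :=
      hμG_cont.intervalIntegrable _ _
    have hii2 : IntervalIntegrable (fun s => μ * G s) volume c t :=
      hμG_cont.intervalIntegrable _ _
    have hsplitI : (∫ s in (0:ℝ)..c, μ * G s) + ∫ s in c..t, μ * G s
        = ∫ s in (0:ℝ)..t, μ * G s :=
      intervalIntegral.integral_add_adjacent_intervals hii1 hii2
    have hpos0 : 0 ≤ ∫ s in (0:ℝ)..c, μ * G s :=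
      intervalIntegral.integral_nonneg hcI.1 (fun s _ => hμG_nonneg s)
    have htot0 : 0 ≤ ∫ s in (0:ℝ)..t, μ * G s :=
      intervalIntegral.integral_nonneg ht.1 (fun s _ => hμG_nonneg s)
    rw [hP0] at hP
    simp only [hΨdef]
    apply max_le _ htot0
    linarith
  -- combine via Grönwall
  set K : ℝ := C₁ + C₂ + 2 * μ with hKdef
  have hK0 : 0 ≤ K := by simp only [hKdef]; linarith [hμ.le, hC₁0, hC₂0]
  set y : ℝ → ℝ := fun s => G s + Φ s + Ψ s with hydef
  have hycont : Continuous y := (hG_cont.add hΦcont).add hΨcont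
  have hynonneg : ∀ s, 0 ≤ y s := by
    intro s
    have := hG_nonneg s
    have := hΦ0 s
    have := hΨ0 s
    simp only [hydef]
    linarith
  have hyineq : ∀ t ∈ Set.Icc 0 T, y t ≤ ∫ s in (0:ℝ)..t, K * y s := by
    intro t ht
    have h1 := hGineq t ht
    have h2 := hΦineq t ht
    have h3 := hΨineq t ht
    have hiiA : IntervalIntegrable (fun s => C₁ * G s + C₂ * (Φ s + Ψ s)) volume 0 t :=
      (((continuous_const.mul hG_cont).add
        (continuous_const.mul (hΦcont.add hΨcont)))).intervalIntegrable _ _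
    have hiiB : IntervalIntegrable (fun s => μ * G s) volume 0 t :=
      hμG_cont.intervalIntegrable _ _
    have hYint : IntervalIntegrable y volume 0 t := hycont.intervalIntegrable _ _
    have hA2 : (∫ s in (0:ℝ)..t, (C₁ * G s + C₂ * (Φ s + Ψ s)))
        ≤ (C₁ + C₂) * ∫ s in (0:ℝ)..t, y s := by
      rw [← intervalIntegral.integral_const_mul]
      apply intervalIntegral.integral_mono_on ht.1 hiiA (hYint.const_mul _)
      intro s _
      simp only [hydef]
      nlinarith [mul_nonneg hC₁0 (hΦ0 s), mul_nonneg hC₁0 (hΨ0 s),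
        mul_nonneg hC₂0 (hG_nonneg s)]
    have hB2 : (∫ s in (0:ℝ)..t, μ * G s) ≤ μ * ∫ s in (0:ℝ)..t, y s := by
      rw [← intervalIntegral.integral_const_mul]
      apply intervalIntegral.integral_mono_on ht.1 hiiB (hYint.const_mul _)
      intro s _
      simp only [hydef]
      nlinarith [mul_nonneg hμ.le (hΦ0 s), mul_nonneg hμ.le (hΨ0 s)]
    have hKY : (∫ s in (0:ℝ)..t, K * y s) = K * ∫ s in (0:ℝ)..t, y s :=
      intervalIntegral.integral_const_mul _ _
    have hKexp : K * (∫ s in (0:ℝ)..t, y s)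
        = (C₁ + C₂) * (∫ s in (0:ℝ)..t, y s) + μ * (∫ s in (0:ℝ)..t, y s)
          + μ * (∫ s in (0:ℝ)..t, y s) := by
      simp only [hKdef]
      ring
    rw [hKY, hKexp]
    simp only [hydef]
    linarith
  have hyzero := gronwall_aux hT0 hK0 hycont.continuousOn (fun t _ => hynonneg t) hyineq
  have hcomp0 : ∀ t ∈ Set.Icc 0 T, G t = 0 ∧ Φ t = 0 ∧ Ψ t = 0 := by
    intro t ht
    have hy := hyzero t ht
    have h1 := hG_nonneg t
    have h2 := hΦ0 t
    have h3 := hΨ0 t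
    simp only [hydef] at hy
    exact ⟨by linarith, by linarith, by linarith⟩
  -- extraction of the conclusions
  constructor
  · intro t ht
    obtain ⟨hGz, hΦz, hΨz⟩ := hcomp0 t ht
    have hτt : τ t = t := hτ_id t ht
    constructor
    · by_contra hcon
      push_neg at hcon
      have hpos : 0 < gbc t - glc t := by
        simp only [hgbcdef, hglcdef, hτt]
        linarith
      have := lt_of_lt_of_le hpos (le_max_left (gbc t - glc t) 0)
      rw [show max (gbc t - glc t) 0 = Ψ t from rfl, hΨz] at this
      linarith
    · by_contra hcon
      push_neg at hcon
      have hpos : 0 < hlc t - hbc t := by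
        simp only [hhlcdef, hhbcdef, hτt]
        linarith
      have := lt_of_lt_of_le hpos (le_max_left (hlc t - hbc t) 0)
      rw [show max (hlc t - hbc t) 0 = Φ t from rfl, hΦz] at this
      linarith
  · intro t ht x hx
    obtain ⟨hGz, hΦz, hΨz⟩ := hcomp0 t ht
    have hτt : τ t = t := hτ_id t ht
    rcases eq_or_lt_of_le hx.1 with hxe | hxl
    · rw [← hxe]
      rw [hul_out t ht (gl t) (fun hc => lt_irrefl _ hc.1)]
      exact hub_nonneg t ht (gl t)
    rcases eq_or_lt_of_le hx.2 with hxe | hxr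
    · rw [hxe]
      rw [hul_out t ht (hl t) (fun hc => lt_irrefl _ hc.2)]
      exact hub_nonneg t ht (hl t)
    have hordg : gbc t ≤ glc t := by
      by_contra hcon
      push_neg at hcon
      have hpos : 0 < Ψ t := lt_of_lt_of_le (by linarith) (le_max_left _ _)
      linarith
    have hordh : hlc t ≤ hbc t := by
      by_contra hcon
      push_neg at hcon
      have hpos : 0 < Φ t := lt_of_lt_of_le (by linarith) (le_max_left _ _)
      linarith
    have hxl' : glc t < x := by simp only [hglcdef, hτt]; exact hxl
    have hxr' : x < hlc t := by simp only [hhlcdef, hτt]; exact hxr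
    have hxb : x ∈ Set.Ioo (gbc t) (hbc t) :=
      ⟨lt_of_le_of_lt hordg hxl', lt_of_lt_of_le hxr' hordh⟩
    have hae0 : (fun x => q t x) =ᵐ[volume] 0 :=
      (MeasureTheory.integral_eq_zero_iff_of_nonneg (hq_nonneg t) (hq_int t)).1 hGz
    have hqx : q t x = 0 := by
      by_contra hqne
      have hqpos : 0 < q t x := lt_of_le_of_ne (hq_nonneg t x) (Ne.symm hqne)
      have hwc : Continuous fun y => max (ulc t y - ubc t y) 0 :=
        ((hulcs t).sub (hubcs t)).max continuous_const
      have hwx : 0 < max (ulc t x - ubc t x) 0 := by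
        rw [← hq_in t x hxb]
        exact hqpos
      have hSopen : IsOpen (Set.Ioo (gbc t) (hbc t)
          ∩ {y | 0 < max (ulc t y - ubc t y) 0}) :=
        isOpen_Ioo.inter (isOpen_lt continuous_const hwc)
      have hSne : (Set.Ioo (gbc t) (hbc t)
          ∩ {y | 0 < max (ulc t y - ubc t y) 0}).Nonempty := ⟨x, hxb, hwx⟩
      have hSpos : 0 < volume (Set.Ioo (gbc t) (hbc t)
          ∩ {y | 0 < max (ulc t y - ubc t y) 0}) := hSopen.measure_pos volume hSne
      have hSsub : (Set.Ioo (gbc t) (hbc t)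
          ∩ {y | 0 < max (ulc t y - ubc t y) 0}) ⊆ {y | ¬ q t y = 0} := by
        rintro y ⟨hy1, hy2⟩
        simp only [Set.mem_setOf_eq]
        rw [hq_in t y hy1]
        exact ne_of_gt hy2
      have hnull := measure_mono_null hSsub (MeasureTheory.ae_iff.1 hae0)
      rw [hnull] at hSpos
      exact lt_irrefl _ hSpos
    have hmax0 : max (ulc t x - ubc t x) 0 = 0 := by
      rw [← hq_in t x hxb]
      exact hqx
    have hle : ulc t x - ubc t x ≤ 0 := by
      by_contra hcon
      push_neg at hcon
      rw [max_eq_left hcon.le] at hmax0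
      linarith
    simp only [hulcdef, hubcdef, hτt] at hle
    linarith
end

section
/- (Comparison with the Cauchy problem.) Let (u,v,g,h) be a solution of system (1.2) and let T > 0. Suppose ū, v̲ : [0,T]×ℝ → ℝ are nonnegative, bounded, continuous and differentiable in t, and satisfy ū_t(t,x) ≥ d₁∫_ℝ J₁(x−y)ū(t,y)dy − d₁ū(t,x) + ū(t,x)(1 − ū(t,x) − k v̲(t,x)) and v̲_t(t,x) ≤ d₂∫_ℝ J₂(x−y)v̲(t,y)dy − d₂v̲(t,x) + γ v̲(t,x)(1 − v̲(t,x) − h ū(t,x)) for all (t,x) ∈ (0,T]×ℝ, with ū(0,x) ≥ u₀(x) and 0 ≤ v̲(0,x) ≤ v₀(x) for all x ∈ ℝ. Then u(t,x) ≤ ū(t,x) and v(t,x) ≥ v̲(t,x) for all t ∈ [0,T] and x ∈ ℝ. -/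
open MeasureTheory Filter Topology

/-- Admissible initial data for system (1.2). -/
def AdmissibleInit (h₀ : ℝ) (u₀ v₀ : ℝ → ℝ) : Prop :=
  0 < h₀ ∧ Continuous u₀ ∧ (∀ x : ℝ, h₀ ≤ |x| → u₀ x = 0) ∧
    (∀ x : ℝ, |x| < h₀ → 0 < u₀ x) ∧
    Continuous v₀ ∧ (∃ C, ∀ x, v₀ x ≤ C) ∧ (∀ x, 0 ≤ v₀ x) ∧ (∃ x, v₀ x ≠ 0)

/-- A solution `(u, v, g, h)` of the free boundary system (1.2), with parameters
`d₁, d₂, hc, k, γ, μ`, kernels `J₁, J₂` and initial data `(u₀, v₀, h₀)`.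
(The interspecific competition constant called `h` in the paper is named `hc` here,
since `h` denotes the right free boundary.) -/
structure IsSolution (d₁ d₂ hc k γ μ h₀ : ℝ) (J₁ J₂ u₀ v₀ : ℝ → ℝ)
    (u v : ℝ → ℝ → ℝ) (g h : ℝ → ℝ) : Prop where
  u_nonneg : ∀ t x, 0 ≤ u t x
  v_nonneg : ∀ t x, 0 ≤ v t x
  u_bdd : ∃ C, ∀ t x, u t x ≤ C
  v_bdd : ∃ C, ∀ t x, v t x ≤ C
  u_cont : Continuous fun p : ℝ × ℝ => u p.1 p.2
  v_cont : Continuous fun p : ℝ × ℝ => v p.1 p.2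
  g_cont : Continuous g
  h_cont : Continuous h
  g_anti : AntitoneOn g (Set.Ici 0)
  h_mono : MonotoneOn h (Set.Ici 0)
  gh_lt : ∀ t ≥ 0, g t < h t
  u_eq : ∀ t > 0, ∀ x, g t < x → x < h t →
    HasDerivAt (fun s => u s x)
      (d₁ * ((∫ y in g t..h t, J₁ (x - y) * u t y) - u t x)
        + u t x * (1 - u t x - k * v t x)) t
  v_eq : ∀ t > 0, ∀ x : ℝ,
    HasDerivAt (fun s => v s x)
      (d₂ * ((∫ y, J₂ (x - y) * v t y) - v t x)
        + γ * v t x * (1 - v t x - hc * u t x)) t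
  u_outside : ∀ t ≥ 0, ∀ x : ℝ, x ∉ Set.Ioo (g t) (h t) → u t x = 0
  h_eq : ∀ t > 0,
    HasDerivAt h (μ * ∫ x in g t..h t, (∫ y in Set.Ioi (h t), J₁ (x - y)) * u t x) t
  g_eq : ∀ t > 0,
    HasDerivAt g (-μ * ∫ x in g t..h t, (∫ y in Set.Iio (g t), J₁ (x - y)) * u t x) t
  h_init : h 0 = h₀
  g_init : g 0 = -h₀
  u_init : ∀ x, u 0 x = u₀ x
  v_init : ∀ x, v 0 x = v₀ x


/-- Auxiliary ODE comparison: if `f t₀ ≤ 0` and wherever `f > 0` on `(t₀, t]` it has a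
derivative bounded by `C ≥ 0`, then `f t ≤ C * (t - t₀)`. -/
lemma aux_ode_key {f : ℝ → ℝ} {t₀ t C : ℝ} (h0t : t₀ ≤ t) (hC : 0 ≤ C)
    (hf : ContinuousOn f (Set.Icc t₀ t)) (hf0 : f t₀ ≤ 0)
    (hderiv : ∀ r, t₀ < r → r ≤ t → 0 < f r → ∃ D, HasDerivAt f D r ∧ D ≤ C) :
    f t ≤ C * (t - t₀) := by
  by_cases hft : f t ≤ 0
  · nlinarith
  push_neg at hft
  set S : Set ℝ := Set.Icc t₀ t ∩ f ⁻¹' Set.Iic 0 with hS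
  have hSne : S.Nonempty := ⟨t₀, ⟨le_rfl, h0t⟩, hf0⟩
  have hSbdd : BddAbove S := ⟨t, fun r hr => hr.1.2⟩
  have hSclosed : IsClosed S :=
    hf.preimage_isClosed_of_isClosed isClosed_Icc isClosed_Iic
  set s := sSup S with hs
  have hsmemS : s ∈ S := hSclosed.csSup_mem hSne hSbdd
  have hsmem : s ∈ Set.Icc t₀ t := hsmemS.1
  have hfs : f s ≤ 0 := hsmemS.2
  have hst : s < t := lt_of_le_of_ne hsmem.2 (fun hst => by rw [hst] at hfs; linarith)
  have hpos : ∀ r ∈ Set.Ioc s t, 0 < f r := by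
    intro r hr
    by_contra h'
    push_neg at h'
    have : r ∈ S := ⟨⟨le_trans hsmem.1 hr.1.le, hr.2⟩, h'⟩
    exact absurd (le_csSup hSbdd this) (not_le.mpr hr.1)
  -- monotonicity of C * r - f r on [s', t] for s' ∈ (s, t)
  have hkey : ∀ s' ∈ Set.Ioo s t, f t ≤ f s' + C * (t - s') := by
    intro s' hs'
    have hsub : Set.Icc s' t ⊆ Set.Icc t₀ t :=
      Set.Icc_subset_Icc (le_trans hsmem.1 hs'.1.le) le_rfl
    have hder : ∀ r ∈ Set.Ioo s' t, ∃ D, HasDerivAt f D r ∧ D ≤ C := by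
      intro r hr
      exact hderiv r (lt_of_le_of_lt hsmem.1 (lt_trans hs'.1 hr.1)) hr.2.le
        (hpos r ⟨lt_trans hs'.1 hr.1, hr.2.le⟩)
    have hmono : MonotoneOn (fun r => C * r - f r) (Set.Icc s' t) := by
      apply monotoneOn_of_deriv_nonneg (convex_Icc s' t)
      · exact ((continuous_const.mul continuous_id).continuousOn).sub (hf.mono hsub)
      · rw [interior_Icc]
        intro r hr
        obtain ⟨D, hD, _⟩ := hder r hr
        exact (((hasDerivAt_id r).const_mul C).sub hD).differentiableAt.differentiableWithinAt
      · rw [interior_Icc]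
        intro r hr
        obtain ⟨D, hD, hDC⟩ := hder r hr
        have h1 : HasDerivAt (fun r => C * r - f r) (C * 1 - D) r :=
          ((hasDerivAt_id r).const_mul C).sub hD
        rw [h1.deriv]; linarith
    have := hmono ⟨le_rfl, hs'.2.le⟩ ⟨hs'.2.le, le_rfl⟩ hs'.2.le
    simp only at this
    linarith
  -- pass to the limit s' → s⁺
  have h2 : Tendsto f (𝓝[>] s) (𝓝 (f s)) := by
    rw [← nhdsWithin_Ioc_eq_nhdsGT hst]
    exact (hf.continuousWithinAt hsmem).mono_left
      (nhdsWithin_mono _ (fun r hr => ⟨le_trans hsmem.1 hr.1.le, hr.2⟩))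
  have h3 : Tendsto (fun s' => f s' + C * (t - s')) (𝓝[>] s) (𝓝 (f s + C * (t - s))) :=
    h2.add (((continuous_const.mul (continuous_const.sub continuous_id)).tendsto s).mono_left
      nhdsWithin_le_nhds)
  have h4 : ∀ᶠ s' in 𝓝[>] s, f t ≤ f s' + C * (t - s') := by
    filter_upwards [Ioo_mem_nhdsGT hst] with s' hs'
    exact hkey s' hs'
  have h5 : f t ≤ f s + C * (t - s) := ge_of_tendsto h3 h4
  have h6 : C * (t - s) ≤ C * (t - t₀) :=
    mul_le_mul_of_nonneg_left (by linarith [hsmem.1]) hC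
  linarith

lemma aux_kernel_mul_integrable {J : ℝ → ℝ} (hJint : Integrable J) (x : ℝ)
    {w : ℝ → ℝ} (hwc : Continuous w) {B : ℝ} (habs : ∀ y, |w y| ≤ B) :
    Integrable (fun y => J (x - y) * w y) := by
  have hJx : Integrable (fun y => J (x - y)) := hJint.comp_sub_left x
  have h1 := hJx.bdd_mul hwc.aestronglyMeasurable (c := B) (ae_of_all _ fun y => by simpa using habs y)
  exact h1.congr (ae_of_all _ fun y => mul_comm _ _)

lemma aux_kernel_conv_le {J : ℝ → ℝ} (hJint : Integrable J) (hJnn : ∀ z, 0 ≤ J z)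
    (hJ1 : (∫ z, J z) = 1) (x : ℝ) {w : ℝ → ℝ} (hwc : Continuous w)
    {B c : ℝ} (habs : ∀ y, |w y| ≤ B) (hwle : ∀ y, w y ≤ c) :
    (∫ y, J (x - y) * w y) ≤ c := by
  have hJx : Integrable (fun y => J (x - y)) := hJint.comp_sub_left x
  have h1 : (∫ y, J (x - y) * w y) ≤ ∫ y, J (x - y) * c :=
    integral_mono (aux_kernel_mul_integrable hJint x hwc habs) (hJx.mul_const c)
      fun y => mul_le_mul_of_nonneg_left (hwle y) (hJnn _)
  have h2 : (∫ y, J (x - y) * c) = c := by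
    rw [integral_mul_const, integral_sub_left_eq_self J volume x, hJ1, one_mul]
  linarith

set_option maxHeartbeats 1000000 in
/-- Lemma 5.2 (iii): comparison with the Cauchy problem. If
`(ū, v̲)` is an upper/lower solution pair of the Cauchy problem of the competition
system on `[0, T] × ℝ`, ordered with `(u₀, v₀)` at `t = 0`, then
`u ≤ ū` and `v ≥ v̲` on `[0, T] × ℝ`. -/
theorem comparison_with_cauchy_problem
    (d₁ d₂ hc k γ μ h₀ : ℝ) (J₁ J₂ u₀ v₀ : ℝ → ℝ)
    (u v : ℝ → ℝ → ℝ) (g h : ℝ → ℝ)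
    (hd₁ : 0 < d₁) (hd₂ : 0 < d₂) (hhc : 0 < hc) (hkpos : 0 < k) (hγ : 0 < γ)
    (hμ : 0 < μ)
    (hJ₁ : IsKernel J₁) (hJ₂ : IsKernel J₂)
    (hinit : AdmissibleInit h₀ u₀ v₀)
    (hsol : IsSolution d₁ d₂ hc k γ μ h₀ J₁ J₂ u₀ v₀ u v g h)
    (T : ℝ) (hT : 0 < T) (ub vl : ℝ → ℝ → ℝ)
    (hub_nonneg : ∀ t ∈ Set.Icc 0 T, ∀ x : ℝ, 0 ≤ ub t x)
    (hvl_nonneg : ∀ t ∈ Set.Icc 0 T, ∀ x : ℝ, 0 ≤ vl t x)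
    (hub_bdd : ∃ C, ∀ t x, ub t x ≤ C) (hvl_bdd : ∃ C, ∀ t x, vl t x ≤ C)
    (hub_cont : ContinuousOn (fun p : ℝ × ℝ => ub p.1 p.2) (Set.Icc 0 T ×ˢ Set.univ))
    (hvl_cont : ContinuousOn (fun p : ℝ × ℝ => vl p.1 p.2) (Set.Icc 0 T ×ˢ Set.univ))
    (hub_eq : ∀ t ∈ Set.Ioc 0 T, ∀ x : ℝ,
      ∃ D, HasDerivAt (fun s => ub s x) D t ∧
        d₁ * (∫ y, J₁ (x - y) * ub t y) - d₁ * ub t x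
          + ub t x * (1 - ub t x - k * vl t x) ≤ D)
    (hvl_eq : ∀ t ∈ Set.Ioc 0 T, ∀ x : ℝ,
      ∃ D, HasDerivAt (fun s => vl s x) D t ∧
        D ≤ d₂ * (∫ y, J₂ (x - y) * vl t y) - d₂ * vl t x
          + γ * vl t x * (1 - vl t x - hc * ub t x))
    (hub_init : ∀ x : ℝ, u₀ x ≤ ub 0 x)
    (hvl_init : ∀ x : ℝ, 0 ≤ vl 0 x ∧ vl 0 x ≤ v₀ x) :
    ∀ t ∈ Set.Icc 0 T, ∀ x : ℝ, u t x ≤ ub t x ∧ vl t x ≤ v t x := by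
  classical
  obtain ⟨Cu, hCu⟩ := hsol.u_bdd
  obtain ⟨Cv, hCv⟩ := hsol.v_bdd
  obtain ⟨Cub, hCub⟩ := hub_bdd
  obtain ⟨Cvl, hCvl⟩ := hvl_bdd
  have hCu0 : 0 ≤ Cu := le_trans (hsol.u_nonneg 0 0) (hCu 0 0)
  have hCv0 : 0 ≤ Cv := le_trans (hsol.v_nonneg 0 0) (hCv 0 0)
  have hCub0 : 0 ≤ Cub := le_trans (hub_nonneg 0 ⟨le_rfl, hT.le⟩ 0) (hCub 0 0)
  have hCvl0 : 0 ≤ Cvl := le_trans (hvl_nonneg 0 ⟨le_rfl, hT.le⟩ 0) (hCvl 0 0)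
  set M : ℝ := max Cu Cvl with hM
  have hM0 : 0 ≤ M := le_trans hCu0 (le_max_left _ _)
  set K : ℝ := d₁ + 1 + k * Cub + d₂ + γ + γ * hc * Cv + 1 with hK
  have hK0 : 0 < K := by
    rw [hK]
    nlinarith [mul_nonneg hkpos.le hCub0, mul_nonneg (mul_nonneg hγ.le hhc.le) hCv0]
  set δ : ℝ := 1 / (2 * K) with hδ
  have hδ0 : 0 < δ := by rw [hδ]; positivity
  -- kernel facts
  have hJ1nn : ∀ z, 0 ≤ J₁ z := hJ₁.2.2.2.1
  have hJ1one : (∫ z, J₁ z) = 1 := hJ₁.2.2.2.2.2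
  have hJ1int : Integrable J₁ := by
    by_contra hcon
    rw [integral_undef hcon] at hJ1one
    norm_num at hJ1one
  have hJ2nn : ∀ z, 0 ≤ J₂ z := hJ₂.2.2.2.1
  have hJ2one : (∫ z, J₂ z) = 1 := hJ₂.2.2.2.2.2
  have hJ2int : Integrable J₂ := by
    by_contra hcon
    rw [integral_undef hcon] at hJ2one
    norm_num at hJ2one
  -- slice continuity
  have huc : ∀ r : ℝ, Continuous fun y => u r y :=
    fun r => hsol.u_cont.comp (Continuous.prodMk_right r)
  have hvc : ∀ r : ℝ, Continuous fun y => v r y :=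
    fun r => hsol.v_cont.comp (Continuous.prodMk_right r)
  have hubc : ∀ r ∈ Set.Icc (0:ℝ) T, Continuous fun y => ub r y := fun r hr =>
    hub_cont.comp_continuous (Continuous.prodMk_right r) fun y => ⟨hr, trivial⟩
  have hvlc : ∀ r ∈ Set.Icc (0:ℝ) T, Continuous fun y => vl r y := fun r hr =>
    hvl_cont.comp_continuous (Continuous.prodMk_right r) fun y => ⟨hr, trivial⟩
  have huct : ∀ x : ℝ, Continuous fun s => u s x :=
    fun x => hsol.u_cont.comp (continuous_id.prodMk continuous_const)
  have hvct : ∀ x : ℝ, Continuous fun s => v s x :=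
    fun x => hsol.v_cont.comp (continuous_id.prodMk continuous_const)
  have hubct : ∀ x : ℝ, ContinuousOn (fun s => ub s x) (Set.Icc 0 T) := fun x =>
    hub_cont.comp (continuous_id.prodMk continuous_const).continuousOn
      fun s hs => ⟨hs, trivial⟩
  have hvlct : ∀ x : ℝ, ContinuousOn (fun s => vl s x) (Set.Icc 0 T) := fun x =>
    hvl_cont.comp (continuous_id.prodMk continuous_const).continuousOn
      fun s hs => ⟨hs, trivial⟩
  -- the one-step comparison
  have step : ∀ t₀ : ℝ, 0 ≤ t₀ → t₀ ≤ T →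
      (∀ y, u t₀ y - ub t₀ y ≤ 0 ∧ vl t₀ y - v t₀ y ≤ 0) →
      ∀ t, t₀ ≤ t → t ≤ T → t ≤ t₀ + δ →
      ∀ x, u t x - ub t x ≤ 0 ∧ vl t x - v t x ≤ 0 := by
    intro t₀ ht₀0 ht₀T hzero
    have claim : ∀ n : ℕ, ∀ t, t₀ ≤ t → t ≤ T → t ≤ t₀ + δ → ∀ x,
        u t x - ub t x ≤ M / 2 ^ n ∧ vl t x - v t x ≤ M / 2 ^ n := by
      intro n
      induction n with
      | zero =>
        intro t ht1 ht2 ht3 x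
        have htIcc : t ∈ Set.Icc (0:ℝ) T := ⟨le_trans ht₀0 ht1, ht2⟩
        have h1 := hub_nonneg t htIcc x
        have h2 := hsol.v_nonneg t x
        have h3 := hCu t x
        have h4 := hCvl t x
        have h5 : Cu ≤ M := le_max_left _ _
        have h6 : Cvl ≤ M := le_max_right _ _
        norm_num
        constructor <;> linarith
      | succ n ih =>
        intro t ht1 ht2 ht3 x
        have hc0 : (0:ℝ) ≤ M / 2 ^ n := by positivity
        have hKc0 : (0:ℝ) ≤ K * (M / 2 ^ n) := mul_nonneg hK0.le hc0
        have hfinal : K * (M / 2 ^ n) * (t - t₀) ≤ M / 2 ^ (n + 1) := by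
          have h71 : K * (M / 2 ^ n) * (t - t₀) ≤ K * (M / 2 ^ n) * δ :=
            mul_le_mul_of_nonneg_left (by linarith) hKc0
          have h7 : K * (M / 2 ^ n) * δ = M / 2 ^ (n + 1) := by
            rw [hδ]
            field_simp [hK0.ne', pow_succ]
            ring
          linarith
        constructor
        · -- u-part
          refine le_trans (aux_ode_key (f := fun s => u s x - ub s x) ht1 hKc0 ?_
            (hzero x).1 ?_) hfinal
          · exact ((huct x).continuousOn).sub
              ((hubct x).mono (Set.Icc_subset_Icc ht₀0 ht2))
          · intro r hr1 hr2 hpos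
            have hpos' : 0 < u r x - ub r x := hpos
            have hr0 : 0 < r := lt_of_le_of_lt ht₀0 hr1
            have hrT : r ≤ T := le_trans hr2 ht2
            have hrIcc : r ∈ Set.Icc (0:ℝ) T := ⟨hr0.le, hrT⟩
            have hubr0 := hub_nonneg r hrIcc x
            have hx : g r < x ∧ x < h r := by
              by_contra hxn
              have hu0 : u r x = 0 :=
                hsol.u_outside r hr0.le x fun hmem => hxn ⟨hmem.1, hmem.2⟩
              rw [hu0] at hpos'
              linarith
            obtain ⟨D, hD, hDle⟩ := hub_eq r ⟨hr0, hrT⟩ x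
            have hDu := hsol.u_eq r hr0 x hx.1 hx.2
            refine ⟨_, hDu.sub hD, ?_⟩
            have ihr := ih r hr1.le hrT (le_trans hr2 ht3)
            have hA : u r x - ub r x ≤ M / 2 ^ n := (ihr x).1
            have hB : vl r x - v r x ≤ M / 2 ^ n := (ihr x).2
            have hI : (∫ y in g r..h r, J₁ (x - y) * u r y) = ∫ y, J₁ (x - y) * u r y := by
              rw [intervalIntegral.integral_of_le (hsol.gh_lt r hr0.le).le]
              refine setIntegral_eq_integral_of_forall_compl_eq_zero fun y hy => ?_
              rw [hsol.u_outside r hr0.le y fun hmem => hy ⟨hmem.1, hmem.2.le⟩, mul_zero]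
            have hintu : Integrable (fun y => J₁ (x - y) * u r y) :=
              aux_kernel_mul_integrable hJ1int x (huc r) (B := Cu) fun y => by
                have := hCu r y; have := hsol.u_nonneg r y
                rw [abs_le]; constructor <;> linarith
            have hintub : Integrable (fun y => J₁ (x - y) * ub r y) :=
              aux_kernel_mul_integrable hJ1int x (hubc r hrIcc) (B := Cub) fun y => by
                have := hCub r y; have := hub_nonneg r hrIcc y
                rw [abs_le]; constructor <;> linarith
            have hconv : (∫ y, J₁ (x - y) * u r y) - (∫ y, J₁ (x - y) * ub r y)
                ≤ M / 2 ^ n := by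
              have hsub : (∫ y, J₁ (x - y) * u r y) - (∫ y, J₁ (x - y) * ub r y)
                  = ∫ y, J₁ (x - y) * (u r y - ub r y) := by
                rw [← integral_sub hintu hintub]
                congr 1; funext y; ring
              rw [hsub]
              refine aux_kernel_conv_le hJ1int hJ1nn hJ1one x
                ((huc r).sub (hubc r hrIcc)) (B := Cu + Cub) ?_ fun y => (ihr y).1
              intro y
              have := hCu r y; have := hsol.u_nonneg r y
              have := hCub r y; have := hub_nonneg r hrIcc y
              simp only [Pi.sub_apply]; rw [abs_le]; constructor <;> linarith
            rw [hI]
            have t1 : d₁ * ((∫ y, J₁ (x - y) * u r y) - (∫ y, J₁ (x - y) * ub r y))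
                ≤ d₁ * (M / 2 ^ n) := mul_le_mul_of_nonneg_left hconv hd₁.le
            have t2 : 0 ≤ d₁ * (u r x - ub r x) := mul_nonneg hd₁.le hpos'.le
            have t4 : 0 ≤ (u r x + ub r x) * (u r x - ub r x) :=
              mul_nonneg (by linarith [hsol.u_nonneg r x]) hpos'.le
            have t5 : 0 ≤ k * v r x * (u r x - ub r x) :=
              mul_nonneg (mul_nonneg hkpos.le (hsol.v_nonneg r x)) hpos'.le
            have t6 : k * ub r x * (vl r x - v r x) ≤ k * Cub * (M / 2 ^ n) := by
              have h61 : k * ub r x * (vl r x - v r x) ≤ k * ub r x * (M / 2 ^ n) :=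
                mul_le_mul_of_nonneg_left hB (mul_nonneg hkpos.le hubr0)
              have h62 : k * ub r x * (M / 2 ^ n) ≤ k * Cub * (M / 2 ^ n) :=
                mul_le_mul_of_nonneg_right
                  (mul_le_mul_of_nonneg_left (hCub r x) hkpos.le) hc0
              linarith
            have hKge : (d₁ + 1 + k * Cub) * (M / 2 ^ n) ≤ K * (M / 2 ^ n) := by
              refine mul_le_mul_of_nonneg_right ?_ hc0
              rw [hK]
              nlinarith [mul_nonneg (mul_nonneg hγ.le hhc.le) hCv0]
            have hexp : d₁ * ((∫ y, J₁ (x - y) * u r y) - u r x)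
                + u r x * (1 - u r x - k * v r x)
                - (d₁ * (∫ y, J₁ (x - y) * ub r y) - d₁ * ub r x
                  + ub r x * (1 - ub r x - k * vl r x))
                = d₁ * ((∫ y, J₁ (x - y) * u r y) - (∫ y, J₁ (x - y) * ub r y))
                  - d₁ * (u r x - ub r x) + (u r x - ub r x)
                  - (u r x + ub r x) * (u r x - ub r x)
                  - k * v r x * (u r x - ub r x)
                  + k * ub r x * (vl r x - v r x) := by ring
            have hexp2 : (d₁ + 1 + k * Cub) * (M / 2 ^ n)
                = d₁ * (M / 2 ^ n) + M / 2 ^ n + k * Cub * (M / 2 ^ n) := by ring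
            linarith [hDle, t1, t2, t4, t5, t6, hA, hKge, hexp, hexp2]
        · -- v-part
          refine le_trans (aux_ode_key (f := fun s => vl s x - v s x) ht1 hKc0 ?_
            (hzero x).2 ?_) hfinal
          · exact ((hvlct x).mono (Set.Icc_subset_Icc ht₀0 ht2)).sub
              ((hvct x).continuousOn)
          · intro r hr1 hr2 hpos
            have hpos' : 0 < vl r x - v r x := hpos
            have hr0 : 0 < r := lt_of_le_of_lt ht₀0 hr1
            have hrT : r ≤ T := le_trans hr2 ht2
            have hrIcc : r ∈ Set.Icc (0:ℝ) T := ⟨hr0.le, hrT⟩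
            have hubr0 := hub_nonneg r hrIcc x
            have hvlr0 := hvl_nonneg r hrIcc x
            obtain ⟨D, hD, hDle⟩ := hvl_eq r ⟨hr0, hrT⟩ x
            have hDv := hsol.v_eq r hr0 x
            refine ⟨_, hD.sub hDv, ?_⟩
            have ihr := ih r hr1.le hrT (le_trans hr2 ht3)
            have hA : u r x - ub r x ≤ M / 2 ^ n := (ihr x).1
            have hB : vl r x - v r x ≤ M / 2 ^ n := (ihr x).2
            have hintvl : Integrable (fun y => J₂ (x - y) * vl r y) :=
              aux_kernel_mul_integrable hJ2int x (hvlc r hrIcc) (B := Cvl) fun y => by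
                have := hCvl r y; have := hvl_nonneg r hrIcc y
                rw [abs_le]; constructor <;> linarith
            have hintv : Integrable (fun y => J₂ (x - y) * v r y) :=
              aux_kernel_mul_integrable hJ2int x (hvc r) (B := Cv) fun y => by
                have := hCv r y; have := hsol.v_nonneg r y
                rw [abs_le]; constructor <;> linarith
            have hconv : (∫ y, J₂ (x - y) * vl r y) - (∫ y, J₂ (x - y) * v r y)
                ≤ M / 2 ^ n := by
              have hsub : (∫ y, J₂ (x - y) * vl r y) - (∫ y, J₂ (x - y) * v r y)
                  = ∫ y, J₂ (x - y) * (vl r y - v r y) := by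
                rw [← integral_sub hintvl hintv]
                congr 1; funext y; ring
              rw [hsub]
              refine aux_kernel_conv_le hJ2int hJ2nn hJ2one x
                ((hvlc r hrIcc).sub (hvc r)) (B := Cvl + Cv) ?_ fun y => (ihr y).2
              intro y
              have := hCvl r y; have := hvl_nonneg r hrIcc y
              have := hCv r y; have := hsol.v_nonneg r y
              simp only [Pi.sub_apply]; rw [abs_le]; constructor <;> linarith
            have s1 : d₂ * ((∫ y, J₂ (x - y) * vl r y) - (∫ y, J₂ (x - y) * v r y))
                ≤ d₂ * (M / 2 ^ n) := mul_le_mul_of_nonneg_left hconv hd₂.le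
            have s2 : 0 ≤ d₂ * (vl r x - v r x) := mul_nonneg hd₂.le hpos'.le
            have s3 : γ * (vl r x - v r x) ≤ γ * (M / 2 ^ n) :=
              mul_le_mul_of_nonneg_left hB hγ.le
            have s4 : 0 ≤ γ * (vl r x + v r x) * (vl r x - v r x) :=
              mul_nonneg (mul_nonneg hγ.le (by linarith [hsol.v_nonneg r x])) hpos'.le
            have s5 : 0 ≤ γ * hc * ub r x * (vl r x - v r x) :=
              mul_nonneg (mul_nonneg (mul_nonneg hγ.le hhc.le) hubr0) hpos'.le
            have s6 : γ * hc * v r x * (u r x - ub r x) ≤ γ * hc * Cv * (M / 2 ^ n) := by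
              have h61 : γ * hc * v r x * (u r x - ub r x)
                  ≤ γ * hc * v r x * (M / 2 ^ n) :=
                mul_le_mul_of_nonneg_left hA
                  (mul_nonneg (mul_nonneg hγ.le hhc.le) (hsol.v_nonneg r x))
              have h62 : γ * hc * v r x * (M / 2 ^ n) ≤ γ * hc * Cv * (M / 2 ^ n) :=
                mul_le_mul_of_nonneg_right
                  (mul_le_mul_of_nonneg_left (hCv r x) (mul_nonneg hγ.le hhc.le)) hc0
              linarith
            have hKge : (d₂ + γ + γ * hc * Cv) * (M / 2 ^ n) ≤ K * (M / 2 ^ n) := by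
              refine mul_le_mul_of_nonneg_right ?_ hc0
              rw [hK]
              nlinarith [mul_nonneg hkpos.le hCub0]
            have hexp : (d₂ * (∫ y, J₂ (x - y) * vl r y) - d₂ * vl r x
                  + γ * vl r x * (1 - vl r x - hc * ub r x))
                - (d₂ * ((∫ y, J₂ (x - y) * v r y) - v r x)
                  + γ * v r x * (1 - v r x - hc * u r x))
                = d₂ * ((∫ y, J₂ (x - y) * vl r y) - (∫ y, J₂ (x - y) * v r y))
                  - d₂ * (vl r x - v r x) + γ * (vl r x - v r x)
                  - γ * (vl r x + v r x) * (vl r x - v r x)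
                  - γ * hc * ub r x * (vl r x - v r x)
                  + γ * hc * v r x * (u r x - ub r x) := by ring
            have hexp2 : (d₂ + γ + γ * hc * Cv) * (M / 2 ^ n)
                = d₂ * (M / 2 ^ n) + γ * (M / 2 ^ n) + γ * hc * Cv * (M / 2 ^ n) := by ring
            linarith [hDle, s1, s2, s3, s4, s5, s6, hKge, hexp, hexp2]
    -- pass to the limit n → ∞
    intro t ht1 ht2 ht3 x
    have hlim : Tendsto (fun n : ℕ => M / 2 ^ n) atTop (𝓝 0) := by
      have h1 : Tendsto (fun n : ℕ => ((1:ℝ)/2) ^ n) atTop (𝓝 0) :=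
        tendsto_pow_atTop_nhds_zero_of_lt_one (by norm_num) (by norm_num)
      have h2 := h1.const_mul M
      rw [mul_zero] at h2
      refine h2.congr fun n => ?_
      rw [div_pow, one_pow]
      ring
    constructor
    · exact ge_of_tendsto' hlim fun n => (claim n t ht1 ht2 ht3 x).1
    · exact ge_of_tendsto' hlim fun n => (claim n t ht1 ht2 ht3 x).2
  -- iterate the step
  have outer : ∀ n : ℕ, ∀ t, 0 ≤ t → t ≤ T → t ≤ n * δ →
      ∀ x, u t x - ub t x ≤ 0 ∧ vl t x - v t x ≤ 0 := by
    intro n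
    induction n with
    | zero =>
      intro t ht0 htT htn x
      have ht : t = 0 := le_antisymm (by simpa using htn) ht0
      subst ht
      constructor
      · rw [hsol.u_init x]; linarith [hub_init x]
      · rw [hsol.v_init x]; linarith [(hvl_init x).2]
    | succ n ih =>
      intro t ht0 htT htn x
      by_cases hcs : t ≤ n * δ
      · exact ih t ht0 htT hcs x
      push_neg at hcs
      have hnδ0 : 0 ≤ (n : ℝ) * δ := mul_nonneg (Nat.cast_nonneg n) hδ0.le
      have hnδT : (n : ℝ) * δ ≤ T := le_trans hcs.le htT
      have htn' : t ≤ (n : ℝ) * δ + δ := by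
        push_cast at htn
        linarith
      exact step ((n : ℝ) * δ) hnδ0 hnδT
        (fun y => ih ((n : ℝ) * δ) hnδ0 hnδT le_rfl y) t hcs.le htT htn' x
  obtain ⟨n, hn⟩ := exists_nat_ge (T / δ)
  have hTn : T ≤ (n : ℝ) * δ := by
    rw [div_le_iff₀ hδ0] at hn
    linarith
  intro t ht x
  have := outer n t ht.1 ht.2 (le_trans ht.2 hTn) x
  exact ⟨by linarith [this.1], by linarith [this.2]⟩
end

section
/- Let (u,v,g,h) be a solution of system (1.2) and suppose J_max := ∫_0^∞ y·J₁(y) dy < ∞. If there exist t₂ ≥ 0, C > 0 and β < 0 such that u(t,x) ≤ C e^{β(t−t₂)} for all t ≥ t₂ and x ∈ [g(t),h(t)], then h(t) ≤ h(t₂) + CμJ_max/|β| for all t ≥ t₂ and g(t) ≥ g(t₂) − CμJ_max/|β| for all t ≥ t₂; in particular h_∞ − g_∞ < ∞. -/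
open MeasureTheory Filter Topology

noncomputable section FrontsAux

open Set

/-- The tail integral `∫_{w}^{∞} J`. -/
def tailInt (J : ℝ → ℝ) (w : ℝ) : ℝ := ∫ z in Set.Ioi w, J z

lemma tailInt_shift (f : ℝ → ℝ) (c x : ℝ) :
    ∫ y in Set.Ioi c, f (y - x) = tailInt f (c - x) := by
  have h1 : MeasurePreserving (fun z : ℝ => z + x) volume volume :=
    ⟨measurable_add_const x, map_add_right_eq_self volume x⟩
  have h2 : MeasurableEmbedding (fun z : ℝ => z + x) :=
    (MeasurableEquiv.addRight x).measurableEmbedding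
  have := h1.setIntegral_preimage_emb h2 (fun y => f (y - x)) (Set.Ioi c)
  simp only [add_sub_cancel_right] at this
  rw [tailInt, ← this]
  congr 1
  ext z; simp [Set.mem_Ioi, lt_sub_iff_add_lt]

lemma tailInt_shift_Iio (f : ℝ → ℝ) (c x : ℝ) :
    ∫ y in Set.Iio c, f (x - y) = tailInt f (x - c) := by
  have hfun : (fun z : ℝ => x - z) = fun z : ℝ => -z + x := by funext z; ring
  have h1 : MeasurePreserving (fun z : ℝ => x - z) volume volume := by
    refine ⟨measurable_const.sub measurable_id, ?_⟩
    rw [hfun]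
    have : (fun z : ℝ => -z + x) = (fun z : ℝ => z + x) ∘ (fun z : ℝ => -z) := rfl
    rw [this, ← Measure.map_map (measurable_add_const x) measurable_neg,
      Measure.map_neg_eq_self, map_add_right_eq_self]
  have h2 : MeasurableEmbedding (fun z : ℝ => x - z) := by
    rw [hfun]
    exact (MeasurableEquiv.addRight x).measurableEmbedding.comp
      (Homeomorph.neg ℝ).toMeasurableEquiv.measurableEmbedding
  have := h1.setIntegral_preimage_emb h2 f (Set.Ioi (x - c))
  have hset : (fun z : ℝ => x - z) ⁻¹' Set.Ioi (x - c) = Set.Iio c := by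
    ext z
    simp only [Set.mem_preimage, Set.mem_Ioi, Set.mem_Iio]
    constructor <;> intro hz <;> linarith
  rw [tailInt, ← this, hset]

lemma tailInt_nonneg {J : ℝ → ℝ} (hpos : ∀ x, 0 ≤ J x) (w : ℝ) : 0 ≤ tailInt J w :=
  setIntegral_nonneg measurableSet_Ioi fun x _ => hpos x

lemma tailInt_eq {J : ℝ → ℝ} (hint : Integrable J) (w : ℝ) :
    tailInt J w = tailInt J 0 - ∫ z in (0:ℝ)..w, J z := by
  rcases le_total 0 w with hw | hw
  · rw [intervalIntegral.integral_of_le hw, eq_sub_iff_add_eq, tailInt, tailInt, add_comm,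
      ← setIntegral_union (Set.Ioc_disjoint_Ioi le_rfl) measurableSet_Ioi
        hint.integrableOn hint.integrableOn, Set.Ioc_union_Ioi_eq_Ioi hw]
  · rw [intervalIntegral.integral_of_ge hw, sub_neg_eq_add, tailInt, tailInt, add_comm,
      ← setIntegral_union (Set.Ioc_disjoint_Ioi le_rfl) measurableSet_Ioi
        hint.integrableOn hint.integrableOn, Set.Ioc_union_Ioi_eq_Ioi hw]

lemma tailInt_hasDerivAt {J : ℝ → ℝ} (hc : Continuous J) (hint : Integrable J) (w : ℝ) :
    HasDerivAt (tailInt J) (-(J w)) w := by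
  have heq : tailInt J = fun w => tailInt J 0 - ∫ z in (0:ℝ)..w, J z :=
    funext (tailInt_eq hint)
  rw [heq]
  simpa using
    ((intervalIntegral.integral_hasDerivAt_right (hc.intervalIntegrable 0 w)
      (hc.stronglyMeasurableAtFilter volume (nhds w)) hc.continuousAt).const_sub (tailInt J 0))

lemma tailInt_continuous {J : ℝ → ℝ} (hc : Continuous J) (hint : Integrable J) :
    Continuous (tailInt J) := by
  have : Differentiable ℝ (tailInt J) := fun w => (tailInt_hasDerivAt hc hint w).differentiableAt
  exact this.continuous

lemma tailInt_intervalIntegral_le {J : ℝ → ℝ} (hc : Continuous J) (hint : Integrable J)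
    (hpos : ∀ x, 0 ≤ J x) (hmom : IntegrableOn (fun y => y * J y) (Set.Ioi 0))
    {a : ℝ} (ha : 0 ≤ a) :
    ∫ w in (0:ℝ)..a, tailInt J w ≤ ∫ y in Set.Ioi 0, y * J y := by
  have hTc : Continuous (tailInt J) := tailInt_continuous hc hint
  have hzJ : Continuous fun z : ℝ => z * J z := continuous_id.mul hc
  have key : (∫ w in (0:ℝ)..a, tailInt J w)
      = (∫ z in (0:ℝ)..a, z * J z) + a * tailInt J a := by
    set D : ℝ → ℝ := fun b =>
      (∫ w in (0:ℝ)..b, tailInt J w) - (∫ z in (0:ℝ)..b, z * J z) - b * tailInt J b with hD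
    have hder : ∀ b, HasDerivAt D 0 b := by
      intro b
      have h1 : HasDerivAt (fun b => ∫ w in (0:ℝ)..b, tailInt J w) (tailInt J b) b :=
        intervalIntegral.integral_hasDerivAt_right (hTc.intervalIntegrable 0 b)
          (hTc.stronglyMeasurableAtFilter volume (nhds b)) hTc.continuousAt
      have h2 : HasDerivAt (fun b => ∫ z in (0:ℝ)..b, z * J z) (b * J b) b :=
        intervalIntegral.integral_hasDerivAt_right (hzJ.intervalIntegrable 0 b)
          (hzJ.stronglyMeasurableAtFilter volume (nhds b)) hzJ.continuousAt
      have h3 : HasDerivAt (fun b => b * tailInt J b)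
          (1 * tailInt J b + b * (-(J b))) b :=
        (hasDerivAt_id b).mul (tailInt_hasDerivAt hc hint b)
      have := (h1.sub h2).sub h3
      refine this.congr_deriv ?_
      ring
    have hconst : D a = D 0 :=
      is_const_of_deriv_eq_zero (fun b => (hder b).differentiableAt)
        (fun b => (hder b).deriv) a 0
    simp only [D, intervalIntegral.integral_same, zero_mul, sub_zero, sub_self] at hconst
    linarith [hconst]
  rw [key]
  have hIa : Set.Ioi a ⊆ Set.Ioi (0:ℝ) := Set.Ioi_subset_Ioi ha
  have hmoma : IntegrableOn (fun y => y * J y) (Set.Ioi a) := hmom.mono_set hIa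
  have h4 : a * tailInt J a ≤ ∫ z in Set.Ioi a, z * J z := by
    rw [tailInt, ← integral_const_mul]
    exact setIntegral_mono_on (hint.integrableOn.const_mul a) hmoma measurableSet_Ioi
      (fun z hz => mul_le_mul_of_nonneg_right (le_of_lt hz) (hpos z))
  have h5 : (∫ z in (0:ℝ)..a, z * J z) + (∫ z in Set.Ioi a, z * J z)
      = ∫ y in Set.Ioi 0, y * J y := by
    rw [intervalIntegral.integral_of_le ha,
      ← setIntegral_union (Set.Ioc_disjoint_Ioi le_rfl) measurableSet_Ioi
        (hmom.mono_set Set.Ioc_subset_Ioi_self) hmoma, Set.Ioc_union_Ioi_eq_Ioi ha]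
  linarith [h4, h5]

end FrontsAux

/-- If `J₁` has finite first moment `J_max = ∫_0^∞ y J₁(y) dy` and
`u` decays exponentially (`u(t,x) ≤ C e^{β(t-t₂)}` with `β < 0`) on the moving domain
for `t ≥ t₂`, then the fronts stay bounded: `h(t) ≤ h(t₂) + CμJ_max/|β|` and
`g(t) ≥ g(t₂) - CμJ_max/|β|`; in particular `h_∞ - g_∞ < ∞`. -/
theorem exponential_decay_implies_bounded_fronts
    (d₁ d₂ hc k γ μ h₀ : ℝ) (J₁ J₂ u₀ v₀ : ℝ → ℝ)
    (u v : ℝ → ℝ → ℝ) (g h : ℝ → ℝ)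
    (hd₁ : 0 < d₁) (hd₂ : 0 < d₂) (hhc : 0 < hc) (hkpos : 0 < k) (hγ : 0 < γ)
    (hμ : 0 < μ)
    (hJ₁ : IsKernel J₁) (hJ₂ : IsKernel J₂)
    (hinit : AdmissibleInit h₀ u₀ v₀)
    (hsol : IsSolution d₁ d₂ hc k γ μ h₀ J₁ J₂ u₀ v₀ u v g h)
    (hmom : IntegrableOn (fun y => y * J₁ y) (Set.Ioi 0))
    (t₂ C β : ℝ) (ht₂ : 0 ≤ t₂) (hC : 0 < C) (hβ : β < 0)
    (hdecay : ∀ t ≥ t₂, ∀ x ∈ Set.Icc (g t) (h t), u t x ≤ C * Real.exp (β * (t - t₂))) :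
    (∀ t ≥ t₂, h t ≤ h t₂ + C * μ * (∫ y in Set.Ioi (0:ℝ), y * J₁ y) / |β|) ∧
    (∀ t ≥ t₂, g t₂ - C * μ * (∫ y in Set.Ioi (0:ℝ), y * J₁ y) / |β| ≤ g t) ∧
    (∃ M, ∀ t ≥ 0, h t - g t ≤ M) := by
  obtain ⟨hJc, hJbdd, hJeven, hJpos, hJ0, hJint1⟩ := hJ₁
  have hint : Integrable J₁ := by
    by_contra hne
    rw [integral_undef hne] at hJint1
    norm_num at hJint1
  set K : ℝ := ∫ y in Set.Ioi (0:ℝ), y * J₁ y with hKdef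
  have hK0 : 0 ≤ K :=
    setIntegral_nonneg measurableSet_Ioi fun y hy => mul_nonneg (le_of_lt hy) (hJpos y)
  have hTc : Continuous (tailInt J₁) := tailInt_continuous hJc hint
  have hIoi : ∀ c x : ℝ, (∫ y in Set.Ioi c, J₁ (x - y)) = tailInt J₁ (c - x) := by
    intro c x
    rw [← tailInt_shift J₁ c x]
    congr 1
    funext y
    rw [← hJeven (y - x), neg_sub]
  have hIio : ∀ c x : ℝ, (∫ y in Set.Iio c, J₁ (x - y)) = tailInt J₁ (x - c) :=
    fun c x => tailInt_shift_Iio J₁ c x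
  -- exponential weight and its derivative
  set E : ℝ → ℝ := fun s => Real.exp (β * (s - t₂)) with hEdef
  have hEpos : ∀ s, 0 < E s := fun s => Real.exp_pos _
  have hEder : ∀ s, HasDerivAt E (E s * β) s := by
    intro s
    have h1 : HasDerivAt (fun s : ℝ => β * (s - t₂)) β s := by
      simpa using ((hasDerivAt_id s).sub_const t₂).const_mul β
    simpa using h1.exp
  have hEcont : Continuous E := Real.continuous_exp.comp
    (continuous_const.mul (continuous_id.sub continuous_const) : Continuous fun s : ℝ => β * (s - t₂))
  -- the common integral bound
  have hbound : ∀ t, t₂ < t →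
      ( (∫ x in g t..h t, tailInt J₁ (h t - x) * u t x) ≤ C * E t * K ∧
        (∫ x in g t..h t, tailInt J₁ (x - g t) * u t x) ≤ C * E t * K ) := by
    intro t ht
    have ht0 : (0:ℝ) ≤ t := le_trans ht₂ ht.le
    have hgh : g t ≤ h t := (hsol.gh_lt t ht0).le
    have hut : Continuous fun x => u t x := hsol.u_cont.comp (Continuous.prodMk_right t)
    have hCE : 0 ≤ C * E t := mul_nonneg hC.le (hEpos t).le
    constructor
    · have hcx : Continuous fun x => tailInt J₁ (h t - x) :=
        hTc.comp (continuous_const.sub continuous_id)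
      have hb1 : (∫ x in g t..h t, tailInt J₁ (h t - x) * u t x)
          ≤ ∫ x in g t..h t, tailInt J₁ (h t - x) * (C * E t) := by
        refine intervalIntegral.integral_mono_on hgh
          ((hcx.mul hut).intervalIntegrable _ _)
          ((hcx.mul continuous_const).intervalIntegrable _ _) fun x hx => ?_
        exact mul_le_mul_of_nonneg_left (hdecay t ht.le x hx) (tailInt_nonneg hJpos _)
      have hb2 : (∫ x in g t..h t, tailInt J₁ (h t - x) * (C * E t))
          = (∫ x in g t..h t, tailInt J₁ (h t - x)) * (C * E t) :=
        intervalIntegral.integral_mul_const _ _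
      have hb3 : (∫ x in g t..h t, tailInt J₁ (h t - x))
          = ∫ w in (0:ℝ)..(h t - g t), tailInt J₁ w := by
        have := intervalIntegral.integral_comp_sub_left (a := g t) (b := h t)
          (tailInt J₁) (h t)
        simpa using this
      have hb4 : (∫ w in (0:ℝ)..(h t - g t), tailInt J₁ w) ≤ K :=
        tailInt_intervalIntegral_le hJc hint hJpos hmom (sub_nonneg.mpr hgh)
      calc (∫ x in g t..h t, tailInt J₁ (h t - x) * u t x)
          ≤ (∫ w in (0:ℝ)..(h t - g t), tailInt J₁ w) * (C * E t) := by
            rw [← hb3, ← hb2]; exact hb1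
        _ ≤ K * (C * E t) := mul_le_mul_of_nonneg_right hb4 hCE
        _ = C * E t * K := by ring
    · have hcx : Continuous fun x => tailInt J₁ (x - g t) :=
        hTc.comp (continuous_id.sub continuous_const)
      have hb1 : (∫ x in g t..h t, tailInt J₁ (x - g t) * u t x)
          ≤ ∫ x in g t..h t, tailInt J₁ (x - g t) * (C * E t) := by
        refine intervalIntegral.integral_mono_on hgh
          ((hcx.mul hut).intervalIntegrable _ _)
          ((hcx.mul continuous_const).intervalIntegrable _ _) fun x hx => ?_
        exact mul_le_mul_of_nonneg_left (hdecay t ht.le x hx) (tailInt_nonneg hJpos _)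
      have hb2 : (∫ x in g t..h t, tailInt J₁ (x - g t) * (C * E t))
          = (∫ x in g t..h t, tailInt J₁ (x - g t)) * (C * E t) :=
        intervalIntegral.integral_mul_const _ _
      have hb3 : (∫ x in g t..h t, tailInt J₁ (x - g t))
          = ∫ w in (0:ℝ)..(h t - g t), tailInt J₁ w := by
        have := intervalIntegral.integral_comp_sub_right (a := g t) (b := h t)
          (tailInt J₁) (g t)
        simpa using this
      have hb4 : (∫ w in (0:ℝ)..(h t - g t), tailInt J₁ w) ≤ K :=
        tailInt_intervalIntegral_le hJc hint hJpos hmom (sub_nonneg.mpr hgh)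
      calc (∫ x in g t..h t, tailInt J₁ (x - g t) * u t x)
          ≤ (∫ w in (0:ℝ)..(h t - g t), tailInt J₁ w) * (C * E t) := by
            rw [← hb3, ← hb2]; exact hb1
        _ ≤ K * (C * E t) := mul_le_mul_of_nonneg_right hb4 hCE
        _ = C * E t * K := by ring
  -- derivative of h is small
  have hderh : ∀ t, t₂ < t → ∃ r, HasDerivAt h r t ∧ r ≤ C * μ * K * E t := by
    intro t ht
    have ht0 : (0:ℝ) < t := lt_of_le_of_lt ht₂ ht
    have hD := hsol.h_eq t ht0
    simp only [hIoi] at hD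
    refine ⟨_, hD, ?_⟩
    have := (hbound t ht).1
    calc μ * ∫ x in g t..h t, tailInt J₁ (h t - x) * u t x
        ≤ μ * (C * E t * K) := mul_le_mul_of_nonneg_left this hμ.le
      _ = C * μ * K * E t := by ring
  have hderg : ∀ t, t₂ < t → ∃ r, HasDerivAt g r t ∧ -(C * μ * K * E t) ≤ r := by
    intro t ht
    have ht0 : (0:ℝ) < t := lt_of_le_of_lt ht₂ ht
    have hD := hsol.g_eq t ht0
    simp only [hIio] at hD
    refine ⟨_, hD, ?_⟩
    have := (hbound t ht).2
    have h2 : μ * ∫ x in g t..h t, tailInt J₁ (x - g t) * u t x ≤ μ * (C * E t * K) :=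
      mul_le_mul_of_nonneg_left this hμ.le
    nlinarith [h2]
  set q : ℝ := C * μ * K / β with hqdef
  have hβne : β ≠ 0 := ne_of_lt hβ
  have hq0 : q ≤ 0 := by
    rw [hqdef]
    exact div_nonpos_iff.mpr (Or.inl ⟨by positivity, hβ.le⟩)
  -- φ is antitone
  set φ : ℝ → ℝ := fun s => h s - q * E s with hφdef
  have hφanti : AntitoneOn φ (Set.Ici t₂) := by
    refine antitoneOn_of_deriv_nonpos (convex_Ici t₂)
      (hsol.h_cont.sub (continuous_const.mul hEcont : Continuous fun s => q * E s)).continuousOn ?_ ?_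
    · intro t ht
      rw [interior_Ici] at ht
      obtain ⟨r, hr, _⟩ := hderh t ht
      exact ((hr.sub ((hEder t).const_mul q)).differentiableAt).differentiableWithinAt
    · intro t ht
      rw [interior_Ici] at ht
      obtain ⟨r, hr, hrle⟩ := hderh t ht
      have hd : HasDerivAt φ (r - q * (E t * β)) t := hr.sub ((hEder t).const_mul q)
      rw [hd.deriv]
      have : q * (E t * β) = C * μ * K * E t := by
        rw [hqdef]; field_simp
      rw [this]
      linarith
  have hψmono : MonotoneOn (fun s => g s + q * E s) (Set.Ici t₂) := by
    refine monotoneOn_of_deriv_nonneg (convex_Ici t₂)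
      (hsol.g_cont.add (continuous_const.mul hEcont : Continuous fun s => q * E s)).continuousOn ?_ ?_
    · intro t ht
      rw [interior_Ici] at ht
      obtain ⟨r, hr, _⟩ := hderg t ht
      exact ((hr.add ((hEder t).const_mul q)).differentiableAt).differentiableWithinAt
    · intro t ht
      rw [interior_Ici] at ht
      obtain ⟨r, hr, hrle⟩ := hderg t ht
      have hd : HasDerivAt (fun s => g s + q * E s) (r + q * (E t * β)) t :=
        hr.add ((hEder t).const_mul q)
      rw [hd.deriv]
      have : q * (E t * β) = C * μ * K * E t := by
        rw [hqdef]; field_simp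
      rw [this]
      linarith
  have hEt₂ : E t₂ = 1 := by simp [hEdef]
  have habs : C * μ * K / |β| = -q := by
    rw [hqdef, abs_of_neg hβ, div_neg]
  have part1 : ∀ t ≥ t₂, h t ≤ h t₂ + C * μ * K / |β| := by
    intro t ht
    have h1 : φ t ≤ φ t₂ := hφanti (Set.self_mem_Ici) ht ht
    simp only [hφdef, hEt₂, mul_one] at h1
    have h2 : q * E t ≤ 0 := mul_nonpos_of_nonpos_of_nonneg hq0 (hEpos t).le
    rw [habs]
    linarith
  have part2 : ∀ t ≥ t₂, g t₂ - C * μ * K / |β| ≤ g t := by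
    intro t ht
    have h1 : g t₂ + q * E t₂ ≤ g t + q * E t := hψmono (Set.self_mem_Ici) ht ht
    simp only [hEt₂, mul_one] at h1
    have h2 : q * E t ≤ 0 := mul_nonpos_of_nonpos_of_nonneg hq0 (hEpos t).le
    rw [habs]
    linarith
  refine ⟨part1, part2, ⟨(h t₂ - g t₂) + 2 * (C * μ * K / |β|), ?_⟩⟩
  intro t ht
  have hq' : 0 ≤ C * μ * K / |β| := by rw [habs]; linarith
  rcases le_total t t₂ with hcase | hcase
  · have h1 : h t ≤ h t₂ := hsol.h_mono ht ht₂ hcase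
    have h2 : g t₂ ≤ g t := hsol.g_anti ht ht₂ hcase
    linarith
  · have h1 := part1 t hcase
    have h2 := part2 t hcase
    linarith
end
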